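/- arXiv:1908.00842 — 4 statements merged into one kernel-verified Lean document; each statement's English description precedes it below -/
import Mathlib

section
/- Let f : G → ZMod m be an (m,n)-generalized bent function. Then: (a) for every x ∈ G and every c ∈ ZMod m, the number of y ∈ G with f(x+y) − f(y) = c equals the number of y ∈ G with f(x+y) − f(y) = −c, and for every x ≠ 0 the number of y ∈ G with f(x+y) = f(y) is even; (b) for every x ∈ G with x ≠ 0, ∑_{y ∈ G} ζ_m^{(f(x+y) − f(y)).val} = 0. -/
/-- The primitive complex `m`-th root of unity `exp(2πi/m)`. -/
noncomputable def zetaC (m : ℕ) : ℂ := Complex.exp (2 * Real.pi * Complex.I / m)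

/-- `f : (Fin n → ZMod 2) → ZMod m` is an `(m,n)`-generalized bent function if
`|∑_x ζ_m^{f x} (-1)^{y·x}|² = 2^n` for all `y`. -/
noncomputable def IsGBF (m n : ℕ) (f : (Fin n → ZMod 2) → ZMod m) : Prop :=
  ∀ y : Fin n → ZMod 2,
    ‖(∑ x : Fin n → ZMod 2,
      zetaC m ^ (f x).val * (-1 : ℂ) ^ (∑ i : Fin n, (y i).val * (x i).val))‖ ^ 2
      = (2 : ℝ) ^ n

lemma zetaC_prim {m : ℕ} (hm : 2 ≤ m) : IsPrimitiveRoot (zetaC m) m := by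
  unfold zetaC; exact Complex.isPrimitiveRoot_exp m (by omega)

lemma zetaC_pow_mod {m : ℕ} (hm : 2 ≤ m) (a : ℕ) : zetaC m ^ (a % m) = zetaC m ^ a := by
  conv_rhs => rw [← Nat.div_add_mod a m]
  rw [pow_add, pow_mul, (zetaC_prim hm).pow_eq_one, one_pow, one_mul]

lemma zetaC_val_add {m : ℕ} (hm : 2 ≤ m) (a b : ZMod m) :
    zetaC m ^ (a + b).val = zetaC m ^ a.val * zetaC m ^ b.val := by
  haveI : NeZero m := ⟨by omega⟩
  rw [ZMod.val_add, zetaC_pow_mod hm, pow_add]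

lemma zetaC_conj {m : ℕ} (hm : 2 ≤ m) (a : ZMod m) :
    (starRingEnd ℂ) (zetaC m ^ a.val) = zetaC m ^ (-a).val := by
  haveI : NeZero m := ⟨by omega⟩
  have h1 : zetaC m ^ (-a).val * zetaC m ^ a.val = 1 := by
    rw [← zetaC_val_add hm, neg_add_cancel]
    simp [ZMod.val_zero]
  have h2 : (starRingEnd ℂ) (zetaC m) = (zetaC m)⁻¹ := by
    unfold zetaC
    rw [← Complex.exp_conj, ← Complex.exp_neg]
    congr 1
    simp [map_div₀, Complex.conj_I, Complex.conj_ofNat]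
    ring
  rw [map_pow, h2, inv_pow]
  exact inv_eq_of_mul_eq_one_left h1

lemma neg_one_pow_mod (a : ℕ) : (-1 : ℂ) ^ a = (-1 : ℂ) ^ (a % 2) := by
  conv_lhs => rw [← Nat.div_add_mod a 2]
  rw [pow_add, pow_mul, neg_one_sq, one_pow, one_mul]

lemma neg_one_pow_congr' {a b : ℕ} (h : (a : ZMod 2) = (b : ZMod 2)) :
    (-1 : ℂ) ^ a = (-1 : ℂ) ^ b := by
  rw [neg_one_pow_mod a, neg_one_pow_mod b, (ZMod.natCast_eq_natCast_iff a b 2).mp h]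

lemma chi_mul {n : ℕ} (w u v : Fin n → ZMod 2) :
    (-1 : ℂ) ^ (∑ i : Fin n, (w i).val * (u i).val) *
      (-1 : ℂ) ^ (∑ i : Fin n, (w i).val * (v i).val)
      = (-1 : ℂ) ^ (∑ i : Fin n, (w i).val * ((u + v) i).val) := by
  rw [← pow_add]
  apply neg_one_pow_congr'
  push_cast [ZMod.natCast_val, ZMod.cast_id]
  rw [← Finset.sum_add_distrib]
  simp [mul_add]

lemma zmod2_eq_one : ∀ {a : ZMod 2}, a ≠ 0 → a = 1 := by decide

lemma sum_zmod2_pow (k : ℕ) :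
    ∑ t : ZMod 2, (-1 : ℂ) ^ (t.val * k) = 1 + (-1 : ℂ) ^ k := by
  rw [show (Finset.univ : Finset (ZMod 2)) = {0, 1} from by decide]
  rw [Finset.sum_insert (by decide), Finset.sum_singleton]
  norm_num [ZMod.val_zero, ZMod.val_one]

lemma orthG {n : ℕ} (z : Fin n → ZMod 2) :
    ∑ w : Fin n → ZMod 2, (-1 : ℂ) ^ (∑ i : Fin n, (w i).val * (z i).val)
      = if z = 0 then (2 : ℂ) ^ n else 0 := by
  have h1 : ∀ w : Fin n → ZMod 2, (-1 : ℂ) ^ (∑ i : Fin n, (w i).val * (z i).val)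
      = ∏ i : Fin n, (-1 : ℂ) ^ ((w i).val * (z i).val) := by
    intro w; rw [Finset.prod_pow_eq_pow_sum]
  simp_rw [h1]
  rw [← Fintype.piFinset_univ,
    ← Finset.prod_univ_sum (fun _ : Fin n => (Finset.univ : Finset (ZMod 2)))
      (fun i t => (-1 : ℂ) ^ (t.val * (z i).val))]
  simp_rw [sum_zmod2_pow]
  by_cases hz : z = 0
  · subst hz; simp; norm_num
  · obtain ⟨i, hi⟩ : ∃ i, z i ≠ 0 := by
      by_contra h; push_neg at h; exact hz (funext h)
    rw [if_neg hz]
    apply Finset.prod_eq_zero (Finset.mem_univ i)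
    have h1 : z i = 1 := zmod2_eq_one hi
    rw [h1]; norm_num [ZMod.val_one]

lemma addself {n : ℕ} (a : Fin n → ZMod 2) : a + a = 0 := by
  funext i
  have h : ∀ b : ZMod 2, b + b = 0 := by decide
  simpa using h (a i)

lemma add_add_cancel' {n : ℕ} (x y : Fin n → ZMod 2) : x + (x + y) = y := by
  rw [← add_assoc, addself, zero_add]

lemma partc (m n : ℕ) (hm : 2 ≤ m)
    (f : (Fin n → ZMod 2) → ZMod m) (hf : IsGBF m n f)
    (x : Fin n → ZMod 2) (hx : x ≠ 0) :
    ∑ y : Fin n → ZMod 2, zetaC m ^ (f (x + y) - f y).val = 0 := by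
  haveI : NeZero m := ⟨by omega⟩
  set ζ := zetaC m with hζ
  set χ : (Fin n → ZMod 2) → (Fin n → ZMod 2) → ℂ :=
    fun w u => (-1 : ℂ) ^ (∑ i : Fin n, (w i).val * (u i).val) with hχ
  have key : ∀ w : Fin n → ZMod 2,
      (∑ u : Fin n → ZMod 2, ζ ^ (f u).val * χ w u) *
      (starRingEnd ℂ) (∑ v : Fin n → ZMod 2, ζ ^ (f v).val * χ w v) = (2 : ℂ) ^ n := by
    intro w
    rw [Complex.mul_conj, ← Complex.sq_norm, hf w]
    push_cast; ring
  have conj_expand : ∀ w : Fin n → ZMod 2,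
      (starRingEnd ℂ) (∑ v : Fin n → ZMod 2, ζ ^ (f v).val * χ w v)
        = ∑ v : Fin n → ZMod 2, ζ ^ (-(f v)).val * χ w v := by
    intro w
    rw [map_sum]
    refine Finset.sum_congr rfl fun v _ => ?_
    rw [map_mul, zetaC_conj hm, hχ]
    simp
    rfl
  have hterm : ∀ w u v : Fin n → ZMod 2,
      (ζ ^ (f u).val * χ w u) * (ζ ^ (-(f v)).val * χ w v) * χ w x
        = (ζ ^ (f u).val * ζ ^ (-(f v)).val) * χ w (u + v + x) := by
    intro w u v
    rw [show χ w (u + v + x) = χ w u * χ w v * χ w x from by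
      rw [hχ]; simp only; rw [chi_mul w u v, chi_mul w (u+v) x]]
    ring
  have hcond : ∀ u v : Fin n → ZMod 2, u + v + x = 0 ↔ u = x + v := by
    intro u v
    constructor
    · intro h
      have h2 : u + v + x + (x + v) = x + v := by rw [h, zero_add]
      have h3 : u + v + x + (x + v) = u + ((v + v) + (x + x)) := by abel
      rw [h3, addself, addself, add_zero, add_zero] at h2
      exact h2
    · intro h
      subst h
      rw [show x + v + v + x = (x + x) + (v + v) from by abel, addself, addself, add_zero]
  have main : ∑ w : Fin n → ZMod 2, (2 : ℂ) ^ n * χ w x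
      = (2 : ℂ) ^ n * ∑ y : Fin n → ZMod 2, ζ ^ (f (x + y) - f y).val := by
    calc ∑ w : Fin n → ZMod 2, (2 : ℂ) ^ n * χ w x
        = ∑ w : Fin n → ZMod 2,
            ((∑ u : Fin n → ZMod 2, ζ ^ (f u).val * χ w u) *
              (∑ v : Fin n → ZMod 2, ζ ^ (-(f v)).val * χ w v)) * χ w x := by
          refine Finset.sum_congr rfl fun w _ => ?_
          rw [← conj_expand w, key w]
      _ = ∑ w : Fin n → ZMod 2, ∑ u : Fin n → ZMod 2, ∑ v : Fin n → ZMod 2,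
            (ζ ^ (f u).val * ζ ^ (-(f v)).val) * χ w (u + v + x) := by
          refine Finset.sum_congr rfl fun w _ => ?_
          rw [Finset.sum_mul_sum, Finset.sum_mul]
          refine Finset.sum_congr rfl fun u _ => ?_
          rw [Finset.sum_mul]
          exact Finset.sum_congr rfl fun v _ => hterm w u v
      _ = ∑ u : Fin n → ZMod 2, ∑ v : Fin n → ZMod 2,
            (ζ ^ (f u).val * ζ ^ (-(f v)).val) *
              ∑ w : Fin n → ZMod 2, χ w (u + v + x) := by
          rw [Finset.sum_comm]
          refine Finset.sum_congr rfl fun u _ => ?_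
          rw [Finset.sum_comm]
          refine Finset.sum_congr rfl fun v _ => ?_
          rw [Finset.mul_sum]
      _ = ∑ u : Fin n → ZMod 2, ∑ v : Fin n → ZMod 2,
            (ζ ^ (f u).val * ζ ^ (-(f v)).val) *
              (if u = x + v then (2 : ℂ) ^ n else 0) := by
          refine Finset.sum_congr rfl fun u _ => Finset.sum_congr rfl fun v _ => ?_
          rw [hχ, orthG (u + v + x), if_congr (hcond u v) rfl rfl]
      _ = ∑ v : Fin n → ZMod 2,
            (ζ ^ (f (x + v)).val * ζ ^ (-(f v)).val) * (2 : ℂ) ^ n := by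
          rw [Finset.sum_comm]
          refine Finset.sum_congr rfl fun v _ => ?_
          simp [mul_ite, Finset.sum_ite_eq', Finset.mem_univ]
      _ = (2 : ℂ) ^ n * ∑ y : Fin n → ZMod 2, ζ ^ (f (x + y) - f y).val := by
          rw [Finset.mul_sum]
          refine Finset.sum_congr rfl fun v _ => ?_
          rw [← zetaC_val_add hm, ← sub_eq_add_neg]
          ring
  have h0 : ∑ w : Fin n → ZMod 2, (2 : ℂ) ^ n * χ w x = 0 := by
    rw [← Finset.mul_sum, hχ]
    simp only
    rw [orthG x, if_neg hx, mul_zero]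
  rw [h0] at main
  have h2 : ((2 : ℂ) ^ n) ≠ 0 := pow_ne_zero _ two_ne_zero
  exact (mul_eq_zero.mp main.symm).resolve_left h2

theorem stmt_2 (m n : ℕ) (hm : 2 ≤ m) (hn : 1 ≤ n)
    (f : (Fin n → ZMod 2) → ZMod m) (hf : IsGBF m n f) :
    (∀ x : Fin n → ZMod 2, ∀ c : ZMod m,
      (Finset.univ.filter (fun y : Fin n → ZMod 2 => f (x + y) - f y = c)).card =
        (Finset.univ.filter (fun y : Fin n → ZMod 2 => f (x + y) - f y = -c)).card) ∧
    (∀ x : Fin n → ZMod 2, x ≠ 0 →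
      Even (Finset.univ.filter (fun y : Fin n → ZMod 2 => f (x + y) = f y)).card) ∧
    (∀ x : Fin n → ZMod 2, x ≠ 0 →
      ∑ y : Fin n → ZMod 2, zetaC m ^ (f (x + y) - f y).val = 0) := by
  refine ⟨?_, ?_, fun x hx => partc m n hm f hf x hx⟩
  · intro x c
    apply Finset.card_bij' (fun y _ => x + y) (fun y _ => x + y)
    · intro y hy
      simp only [Finset.mem_filter, Finset.mem_univ, true_and] at hy ⊢
      rw [add_add_cancel']; linear_combination -hy
    · intro y hy
      simp only [Finset.mem_filter, Finset.mem_univ, true_and] at hy ⊢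
      rw [add_add_cancel']; linear_combination -hy
    · intro y _; exact add_add_cancel' x y
    · intro y _; exact add_add_cancel' x y
  · intro x hx
    set s := Finset.univ.filter (fun y : Fin n → ZMod 2 => f (x + y) = f y) with hs
    have hsum : ∑ y ∈ s, (1 : ZMod 2) = 0 := by
      apply Finset.sum_involution (fun y _ => x + y)
      · intro y _; decide
      · intro y _ _ h
        apply hx
        have := congrArg (fun t => t + y) h
        simpa [add_assoc, addself] using this
      · intro y hy
        simp only [hs, Finset.mem_filter, Finset.mem_univ, true_and] at hy ⊢
        rw [add_add_cancel']; exact hy.symm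
      · intro y _; exact add_add_cancel' x y
    rw [Finset.sum_const, nsmul_eq_mul, mul_one] at hsum
    exact even_iff_two_dvd.mpr ((ZMod.natCast_eq_zero_iff _ 2).mp hsum)
end

section
/- Let m = ∏_{i=1}^{s} p_i^{α_i} with p₁ < p₂ < ⋯ < p_s odd primes and α_i ≥ 1, let n ≥ 1, and let 1 ≤ r ≤ s be such that p₁ + p_i > 2^n for every i with r < i ≤ s. If there is no (∏_{i=1}^{r} p_i^{α_i}, n)-generalized bent function, then there is no (m, n)-generalized bent function. -/
open Finset Polynomial

namespace GBFaux

/-! ### Root of unity exponent arithmetic -/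

lemma pow_val_mod {m : ℕ} {ζ : ℂ} (hζ : IsPrimitiveRoot ζ m) (a : ℕ) :
    ζ ^ (a % m) = ζ ^ a := by
  conv_rhs => rw [← Nat.mod_add_div a m, pow_add, pow_mul, hζ.pow_eq_one, one_pow, mul_one]

lemma pow_congr {m : ℕ} {ζ : ℂ} (hζ : IsPrimitiveRoot ζ m) {a b : ℕ}
    (h : a ≡ b [MOD m]) : ζ ^ a = ζ ^ b := by
  rw [← pow_val_mod hζ a, ← pow_val_mod hζ b]
  exact congrArg (ζ ^ ·) h

lemma pow_val_add {m : ℕ} [NeZero m] {ζ : ℂ} (hζ : IsPrimitiveRoot ζ m) (a b : ZMod m) :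
    ζ ^ (a + b).val = ζ ^ a.val * ζ ^ b.val := by
  rw [← pow_add]
  refine pow_congr hζ ?_
  rw [ZMod.val_add]
  exact Nat.mod_modEq _ m

lemma pow_val_natmul {m : ℕ} [NeZero m] {ζ : ℂ} (hζ : IsPrimitiveRoot ζ m) (u : ℕ) (a : ZMod m) :
    ζ ^ ((u : ZMod m) * a).val = (ζ ^ a.val) ^ u := by
  rw [← pow_mul]
  refine pow_congr hζ ?_
  rw [ZMod.val_mul]
  refine (Nat.mod_modEq _ m).trans ?_
  calc ((u : ZMod m)).val * a.val ≡ u * a.val [MOD m] :=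
        Nat.ModEq.mul_right a.val (ZMod.val_natCast m u ▸ Nat.mod_modEq u m)
    _ = a.val * u := Nat.mul_comm _ _

lemma ne_zero_of_prim {m : ℕ} [NeZero m] {ζ : ℂ} (hζ : IsPrimitiveRoot ζ m) : ζ ≠ 0 := by
  intro h
  have h1 : ζ ^ m = 1 := hζ.pow_eq_one
  rw [h, zero_pow (NeZero.ne m)] at h1
  exact zero_ne_one h1

lemma pow_val_ne_zero {m : ℕ} [NeZero m] {ζ : ℂ} (hζ : IsPrimitiveRoot ζ m) (a : ZMod m) :
    ζ ^ a.val ≠ 0 := pow_ne_zero _ (ne_zero_of_prim hζ)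

lemma pow_val_eq_one_iff {m : ℕ} [NeZero m] {ζ : ℂ} (hζ : IsPrimitiveRoot ζ m) (a : ZMod m) :
    ζ ^ a.val = 1 ↔ a = 0 := by
  rw [hζ.pow_eq_one_iff_dvd]
  constructor
  · intro h
    have := ZMod.val_lt a
    have h0 : a.val = 0 := Nat.eq_zero_of_dvd_of_lt h this |>.symm ▸ rfl
    exact (ZMod.val_eq_zero a).mp h0
  · rintro rfl
    simp [ZMod.val_zero]

lemma pow_val_zero {m : ℕ} [NeZero m] {ζ : ℂ} (_hζ : IsPrimitiveRoot ζ m) :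
    ζ ^ (0 : ZMod m).val = 1 := by simp [ZMod.val_zero]

/-! ### Conjugation principle -/

lemma coprime_of_modEq {u a N : ℕ} (h : u ≡ a [MOD N]) (ha : a.Coprime N) :
    u.Coprime N := by
  have : Nat.gcd N u = Nat.gcd N a := by
    rw [Nat.gcd_rec N u, Nat.gcd_rec N a, h]
  rw [Nat.coprime_comm] at ha ⊢
  rwa [Nat.Coprime, this]

lemma conj_sum {m : ℕ} [NeZero m] {ζ : ℂ} (hζ : IsPrimitiveRoot ζ m)
    {A : Type*} (s : Finset A) (g : A → ZMod m) (k : ℤ)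
    (hrel : (∑ x ∈ s, ζ ^ (g x).val) + (k : ℂ) = 0)
    (u : ℕ) (hu : u.Coprime m) :
    (∑ x ∈ s, ζ ^ ((u : ZMod m) * g x).val) + (k : ℂ) = 0 := by
  have hm : 0 < m := Nat.pos_of_ne_zero (NeZero.ne m)
  set P : ℚ[X] := (∑ x ∈ s, X ^ (g x).val) + C (k : ℚ) with hP
  have hev : ∀ w : ℂ, aeval w P = (∑ x ∈ s, w ^ (g x).val) + (k : ℂ) := by
    intro w
    simp [hP, map_sum, map_add, aeval_C]
  have h0 : aeval ζ P = 0 := by rw [hev]; exact hrel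
  have hdvd : minpoly ℚ ζ ∣ P := minpoly.dvd ℚ ζ h0
  rw [← Polynomial.cyclotomic_eq_minpoly_rat hζ hm] at hdvd
  obtain ⟨H, hH⟩ := hdvd
  have hprim : IsPrimitiveRoot (ζ ^ u) m := hζ.pow_of_coprime u hu
  have hroot : aeval (ζ ^ u) (cyclotomic m ℚ) = 0 := by
    have := hprim.isRoot_cyclotomic hm (R := ℂ)
    rw [Polynomial.IsRoot] at this
    rw [Polynomial.aeval_def, Polynomial.eval₂_eq_eval_map, Polynomial.map_cyclotomic]
    exact this
  have : aeval (ζ ^ u) P = 0 := by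
    rw [hH, map_mul, hroot, zero_mul]
  rw [hev] at this
  convert this using 2
  refine Finset.sum_congr rfl fun x _ => ?_
  rw [pow_val_natmul hζ u (g x), ← pow_mul, ← pow_mul, Nat.mul_comm]

end GBFaux

open Finset Polynomial
namespace GBFaux

section CRT

variable (M Q m : ℕ)

noncomputable def aComp (hm : m = M * Q) (hcop : M.Coprime Q) (h : ZMod m) : ZMod M :=
  (↑(ZMod.unitOfCoprime Q hcop.symm)⁻¹ : ZMod M) * (ZMod.castHom ⟨Q, hm⟩ (ZMod M) h)

noncomputable def dComp (hm : m = M * Q) (hcop : M.Coprime Q) (h : ZMod m) : ZMod Q :=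
  (↑(ZMod.unitOfCoprime M hcop)⁻¹ : ZMod Q) *
    (ZMod.castHom ⟨M, by rw [hm, Nat.mul_comm]⟩ (ZMod Q) h)

variable {M Q m : ℕ} (hm : m = M * Q) (hcop : M.Coprime Q)

lemma aComp_add (h h' : ZMod m) :
    aComp M Q m hm hcop (h + h') = aComp M Q m hm hcop h + aComp M Q m hm hcop h' := by
  simp [aComp, map_add, mul_add]

lemma dComp_add (h h' : ZMod m) :
    dComp M Q m hm hcop (h + h') = dComp M Q m hm hcop h + dComp M Q m hm hcop h' := by
  simp [dComp, map_add, mul_add]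

lemma aComp_neg (h : ZMod m) :
    aComp M Q m hm hcop (-h) = - aComp M Q m hm hcop h := by
  simp [aComp, map_neg]

lemma dComp_neg (h : ZMod m) :
    dComp M Q m hm hcop (-h) = - dComp M Q m hm hcop h := by
  simp [dComp, map_neg]

lemma aComp_zero : aComp M Q m hm hcop 0 = 0 := by simp [aComp]

lemma dComp_zero : dComp M Q m hm hcop 0 = 0 := by simp [dComp]

lemma aComp_natmul (u : ℕ) (hu : u ≡ 1 [MOD M]) (h : ZMod m) :
    aComp M Q m hm hcop ((u : ZMod m) * h) = aComp M Q m hm hcop h := by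
  have h1 : ((u : ℕ) : ZMod M) = 1 := by
    have := (ZMod.natCast_eq_natCast_iff u 1 M).mpr hu
    simpa using this
  simp only [aComp, map_mul, map_natCast, h1, one_mul]

lemma dComp_natmul (u j : ℕ) (hu : u ≡ j [MOD Q]) (h : ZMod m) :
    dComp M Q m hm hcop ((u : ZMod m) * h) = (j : ZMod Q) * dComp M Q m hm hcop h := by
  have h1 : ((u : ℕ) : ZMod Q) = (j : ZMod Q) := (ZMod.natCast_eq_natCast_iff u j Q).mpr hu
  simp only [dComp, map_mul, map_natCast, h1]
  ring

lemma comp_eq_zero [NeZero M] [NeZero Q] (h : ZMod m)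
    (ha : aComp M Q m hm hcop h = 0) (hd : dComp M Q m hm hcop h = 0) : h = 0 := by
  subst hm
  haveI : NeZero (M * Q) := ⟨Nat.mul_ne_zero (NeZero.ne M) (NeZero.ne Q)⟩
  unfold aComp at ha
  unfold dComp at hd
  have hMv : (h.val : ZMod M) = 0 := by
    have h2 := (Units.mul_right_eq_zero (ZMod.unitOfCoprime Q hcop.symm)⁻¹).mp ha
    rwa [ZMod.castHom_apply, ← ZMod.natCast_val] at h2
  have hQv : (h.val : ZMod Q) = 0 := by
    have h2 := (Units.mul_right_eq_zero (ZMod.unitOfCoprime M hcop)⁻¹).mp hd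
    rwa [ZMod.castHom_apply, ← ZMod.natCast_val] at h2
  have hdM : M ∣ h.val := (ZMod.natCast_eq_zero_iff _ _).mp hMv
  have hdQ : Q ∣ h.val := (ZMod.natCast_eq_zero_iff _ _).mp hQv
  have hdvd : M * Q ∣ h.val := hcop.mul_dvd_of_dvd_of_dvd hdM hdQ
  have h0 : h.val = 0 := Nat.eq_zero_of_dvd_of_lt hdvd (ZMod.val_lt h) |>.symm ▸ rfl
  exact (ZMod.val_eq_zero h).mp h0

lemma split [NeZero M] [NeZero Q] (ζ : ℂ) (hζ : IsPrimitiveRoot ζ m) (h : ZMod m) :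
    ζ ^ h.val =
      (ζ ^ Q) ^ ((aComp M Q m hm hcop h).val) * (ζ ^ M) ^ ((dComp M Q m hm hcop h).val) := by
  subst hm
  haveI : NeZero (M * Q) := ⟨Nat.mul_ne_zero (NeZero.ne M) (NeZero.ne Q)⟩
  set A := (aComp M Q (M * Q) rfl hcop h).val with hA
  set D := (dComp M Q (M * Q) rfl hcop h).val with hD
  rw [← pow_mul, ← pow_mul, ← pow_add]
  refine (pow_congr hζ ?_).symm
  refine (Nat.modEq_and_modEq_iff_modEq_mul hcop).mp ⟨?_, ?_⟩
  · rw [← ZMod.natCast_eq_natCast_iff]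
    push_cast
    have h1 : ((A : ℕ) : ZMod M) = aComp M Q (M * Q) rfl hcop h := by
      rw [hA, ZMod.natCast_val, ZMod.cast_id]
    have h2 : ((h.val : ℕ) : ZMod M) = (ZMod.castHom ⟨Q, rfl⟩ (ZMod M)) h := by
      rw [ZMod.castHom_apply, ZMod.natCast_val]
    rw [h1, h2]
    unfold aComp
    rw [← mul_assoc]
    have h3 : ((Q : ZMod M)) * ↑(ZMod.unitOfCoprime Q hcop.symm)⁻¹ = 1 := by
      rw [← ZMod.coe_unitOfCoprime Q hcop.symm, ← Units.val_mul, mul_inv_cancel, Units.val_one]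
    rw [h3, one_mul]
    simp
  · rw [← ZMod.natCast_eq_natCast_iff]
    push_cast
    have h1 : ((D : ℕ) : ZMod Q) = dComp M Q (M * Q) rfl hcop h := by
      rw [hD, ZMod.natCast_val, ZMod.cast_id]
    have h2 : ((h.val : ℕ) : ZMod Q) = (ZMod.castHom ⟨M, by rw [Nat.mul_comm]⟩ (ZMod Q)) h := by
      rw [ZMod.castHom_apply, ZMod.natCast_val]
    rw [h1, h2]
    unfold dComp
    rw [← mul_assoc]
    have h3 : ((M : ZMod Q)) * ↑(ZMod.unitOfCoprime M hcop)⁻¹ = 1 := by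
      rw [← ZMod.coe_unitOfCoprime M hcop, ← Units.val_mul, mul_inv_cancel, Units.val_one]
    rw [h3, one_mul]
    simp

end CRT
end GBFaux

open Finset Polynomial
namespace GBFaux

lemma geom_full {N : ℕ} (hN : 0 < N) {ρ : ℂ} (hρ : ρ ^ N = 1) :
    ∑ j ∈ range N, ρ ^ j = if ρ = 1 then (N : ℂ) else 0 := by
  split
  · next h => subst h; simp
  · next h => rw [geom_sum_eq h, hρ]; simp

lemma unit_sum {q γ : ℕ} (hq : 1 < q) (hγ : 1 ≤ γ) {ρ : ℂ} (hρ : ρ ^ (q ^ γ) = 1) :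
    ∑ j ∈ (range (q ^ γ)).filter (fun j => ¬ q ∣ j), ρ ^ j
      = (if ρ = 1 then ((q ^ γ : ℕ) : ℂ) else 0)
        - (if ρ ^ q = 1 then ((q ^ (γ - 1) : ℕ) : ℂ) else 0) := by
  have hq0 : q ≠ 0 := by omega
  have hqq : q * q ^ (γ - 1) = q ^ γ := by
    rw [← pow_succ']
    congr 1
    omega
  have himg : (range (q ^ (γ - 1))).image (fun i => q * i)
      = (range (q ^ γ)).filter (fun j => q ∣ j) := by
    ext j
    simp only [mem_image, mem_filter, mem_range]
    constructor
    · rintro ⟨i, hi, rfl⟩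
      refine ⟨?_, Dvd.intro i rfl⟩
      calc q * i < q * q ^ (γ - 1) := by
            exact (Nat.mul_lt_mul_left (by omega)).mpr hi
        _ = q ^ γ := hqq
    · rintro ⟨hj, ⟨i, rfl⟩⟩
      exact ⟨i, by
        by_contra hii
        push_neg at hii
        have h2 : q * q ^ (γ - 1) ≤ q * i := Nat.mul_le_mul_left q hii
        rw [hqq] at h2
        omega, rfl⟩
  have hmultsum : ∑ j ∈ (range (q ^ γ)).filter (fun j => q ∣ j), ρ ^ j
      = if ρ ^ q = 1 then ((q ^ (γ - 1) : ℕ) : ℂ) else 0 := by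
    rw [← himg, Finset.sum_image (by
      intro a _ b _ hab
      exact Nat.eq_of_mul_eq_mul_left (by omega) hab)]
    have : ∀ i, ρ ^ (q * i) = (ρ ^ q) ^ i := fun i => by rw [pow_mul]
    rw [Finset.sum_congr rfl (fun i _ => this i)]
    refine geom_full (pow_pos (by omega) _) ?_
    rw [← pow_mul, hqq, hρ]
  have hfullsum : ∑ j ∈ range (q ^ γ), ρ ^ j = if ρ = 1 then ((q ^ γ : ℕ) : ℂ) else 0 :=
    geom_full (pow_pos (by omega) _) hρ
  have hsplit := Finset.sum_filter_add_sum_filter_not (range (q ^ γ))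
    (fun j => q ∣ j) (fun j => ρ ^ j)
  rw [hmultsum, hfullsum] at hsplit
  linear_combination hsplit

end GBFaux

open Finset Polynomial
namespace GBFaux

section Constancy

lemma dvd_aux {q γ : ℕ} (hq : 0 < q) (hγ : 1 ≤ γ) {E : ℕ} :
    q ^ γ ∣ E * q ↔ q ^ (γ - 1) ∣ E := by
  have hγ' : q ^ γ = q ^ (γ - 1) * q := by rw [← pow_succ]; congr 1; omega
  rw [hγ', Nat.mul_dvd_mul_iff_right hq]

/-- The coset-constancy theorem: in a vanishing (shifted) sum of `m`-th roots of unity,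
the partial sums over classes of the `q^γ`-component are constant on cosets
mod `q^(γ-1)`. -/
lemma coset_constancy {M q γ m : ℕ} (hq : q.Prime) (hγ : 1 ≤ γ) (hm : m = M * q ^ γ)
    (hcop : M.Coprime (q ^ γ)) [NeZero M]
    {ζ : ℂ} (hζ : IsPrimitiveRoot ζ m)
    {A : Type*} [DecidableEq A] (s : Finset A) (g : A → ZMod m) (k : ℤ)
    (hrel : (∑ x ∈ s, ζ ^ (g x).val) + (k : ℂ) = 0)
    (c c' : ZMod (q ^ γ))
    (hcc : (ZMod.castHom (pow_dvd_pow q (Nat.sub_le γ 1)) (ZMod (q ^ (γ - 1)))) c =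
      (ZMod.castHom (pow_dvd_pow q (Nat.sub_le γ 1)) (ZMod (q ^ (γ - 1)))) c') :
    ((∑ x ∈ s.filter (fun x => dComp M (q ^ γ) m hm hcop (g x) = c),
        (ζ ^ (q ^ γ)) ^ ((aComp M (q ^ γ) m hm hcop (g x)).val))
      + (if c = 0 then (k : ℂ) else 0))
    = ((∑ x ∈ s.filter (fun x => dComp M (q ^ γ) m hm hcop (g x) = c'),
        (ζ ^ (q ^ γ)) ^ ((aComp M (q ^ γ) m hm hcop (g x)).val))
      + (if c' = 0 then (k : ℂ) else 0)) := by
  haveI : NeZero (q ^ γ) := ⟨pow_ne_zero _ hq.ne_zero⟩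
  haveI : NeZero m := ⟨by rw [hm]; exact Nat.mul_ne_zero (NeZero.ne M) (NeZero.ne _)⟩
  have hmpos : 0 < m := Nat.pos_of_ne_zero (NeZero.ne m)
  set θ : ℂ := ζ ^ M with hθdef
  set η : ℂ := ζ ^ (q ^ γ) with hηdef
  have hθ : IsPrimitiveRoot θ (q ^ γ) := hζ.pow hmpos hm
  set π : ZMod (q ^ γ) → ZMod (q ^ (γ - 1)) :=
    ⇑(ZMod.castHom (pow_dvd_pow q (Nat.sub_le γ 1)) (ZMod (q ^ (γ - 1)))) with hπdef
  set d : A → ZMod (q ^ γ) := fun x => dComp M (q ^ γ) m hm hcop (g x) with hd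
  set aE : A → ℂ := fun x => η ^ ((aComp M (q ^ γ) m hm hcop (g x)).val) with haE
  have hπsub : ∀ e e' : ZMod (q ^ γ), π (e - e') = π e - π e' := fun e e' => by
    rw [hπdef]; exact map_sub _ e e'
  have hπ0 : π 0 = 0 := by rw [hπdef]; exact map_zero _
  have hπzero : ∀ e : ZMod (q ^ γ), π e = 0 ↔ q ^ (γ - 1) ∣ e.val := by
    intro e
    rw [hπdef, ZMod.castHom_apply, ← ZMod.natCast_val, ZMod.natCast_eq_zero_iff]
  set filt : Finset ℕ := (range (q ^ γ)).filter (fun j => ¬ q ∣ j) with hfilt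
  -- the key identity for each class value `c₀`
  have KEY : ∀ c₀ : ZMod (q ^ γ),
      ((q ^ γ : ℕ) : ℂ) * ((∑ x ∈ s.filter (fun x => d x = c₀), aE x)
          + (if c₀ = 0 then (k : ℂ) else 0))
      = ((q ^ (γ - 1) : ℕ) : ℂ) *
        ((∑ x ∈ s.filter (fun x => π (d x) = π c₀), aE x)
          + (if π c₀ = 0 then (k : ℂ) else 0)) := by
    intro c₀
    -- the conjugated relations
    have hrelj : ∀ j ∈ filt,
        (∑ x ∈ s, aE x * (θ ^ ((d x - c₀).val)) ^ j)
          + (k : ℂ) * (θ ^ (((0 : ZMod (q ^ γ)) - c₀).val)) ^ j = 0 := by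
      intro j hj
      rw [hfilt, mem_filter, mem_range] at hj
      have hjq : j.Coprime (q ^ γ) := by
        exact Nat.Coprime.pow_right γ ((hq.coprime_iff_not_dvd.mpr hj.2).symm)
      obtain ⟨u, hu⟩ := Nat.chineseRemainder hcop 1 j
      have hu1 : u ≡ 1 [MOD M] := hu.1
      have huj : u ≡ j [MOD (q ^ γ)] := hu.2
      have hucop : u.Coprime m := by
        rw [hm]
        exact Nat.Coprime.mul_right (coprime_of_modEq hu1 (Nat.coprime_one_left M))
          (coprime_of_modEq huj hjq)
      have hconj := conj_sum hζ s g k hrel u hucop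
      have hterm : ∀ x, ζ ^ (((u : ZMod m)) * g x).val
          = aE x * (θ ^ ((d x).val)) ^ j := by
        intro x
        rw [split hm hcop ζ hζ ((u : ZMod m) * g x)]
        rw [aComp_natmul hm hcop u hu1 (g x), dComp_natmul hm hcop u j huj (g x)]
        congr 1
        exact pow_val_natmul hθ j (d x)
      rw [Finset.sum_congr rfl (fun x _ => hterm x)] at hconj
      rw [zero_sub]
      have hx : ∀ x : A, aE x * (θ ^ ((d x - c₀).val)) ^ j
          = aE x * (θ ^ ((d x).val)) ^ j * (θ ^ (((-c₀) : ZMod (q ^ γ)).val)) ^ j := by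
        intro x
        rw [mul_assoc, ← mul_pow, ← pow_val_add hθ (d x) (-c₀), ← sub_eq_add_neg]
      simp only [hx]
      rw [← Finset.sum_mul]
      linear_combination ((θ ^ (((-c₀) : ZMod (q ^ γ)).val)) ^ j) * hconj
    -- sum the relations over j
    have hsum0 : (∑ x ∈ s, aE x * (∑ j ∈ filt, (θ ^ ((d x - c₀).val)) ^ j))
        + (k : ℂ) * (∑ j ∈ filt, (θ ^ (((0 : ZMod (q ^ γ)) - c₀).val)) ^ j) = 0 := by
      simp only [Finset.mul_sum]
      rw [Finset.sum_comm, ← Finset.sum_add_distrib]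
      exact Finset.sum_eq_zero hrelj
    -- evaluate the character sums
    have hval : ∀ e : ZMod (q ^ γ), (∑ j ∈ filt, (θ ^ (e.val)) ^ j)
        = (if e = 0 then ((q ^ γ : ℕ) : ℂ) else 0)
          - (if π e = 0 then ((q ^ (γ - 1) : ℕ) : ℂ) else 0) := by
      intro e
      have h1 : (θ ^ e.val) ^ (q ^ γ) = 1 := by
        rw [← pow_mul, Nat.mul_comm, pow_mul, hθ.pow_eq_one, one_pow]
      have h2 := unit_sum hq.one_lt hγ h1
      rw [hfilt, h2]
      congr 1
      · exact if_congr (pow_val_eq_one_iff hθ e) rfl rfl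
      · refine if_congr ?_ rfl rfl
        rw [← pow_mul, hθ.pow_eq_one_iff_dvd (e.val * q), hπzero e]
        exact dvd_aux hq.pos hγ
    have hval' : ∀ x : A, (∑ j ∈ filt, (θ ^ ((d x - c₀).val)) ^ j)
        = (if d x = c₀ then ((q ^ γ : ℕ) : ℂ) else 0)
          - (if π (d x) = π c₀ then ((q ^ (γ - 1) : ℕ) : ℂ) else 0) := by
      intro x
      rw [hval (d x - c₀)]
      congr 1
      · exact if_congr sub_eq_zero rfl rfl
      · exact if_congr (by rw [hπsub, sub_eq_zero]) rfl rfl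
    have hval0 : (∑ j ∈ filt, (θ ^ (((0 : ZMod (q ^ γ)) - c₀).val)) ^ j)
        = (if c₀ = 0 then ((q ^ γ : ℕ) : ℂ) else 0)
          - (if π c₀ = 0 then ((q ^ (γ - 1) : ℕ) : ℂ) else 0) := by
      rw [hval ((0 : ZMod (q ^ γ)) - c₀)]
      congr 1
      · exact if_congr (by rw [zero_sub, neg_eq_zero]) rfl rfl
      · exact if_congr (by rw [hπsub, hπ0, zero_sub, neg_eq_zero]) rfl rfl
    simp only [hval'] at hsum0
    rw [hval0] at hsum0
    have expand : ∑ x ∈ s, aE x * ((if d x = c₀ then ((q ^ γ : ℕ) : ℂ) else 0)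
        - (if π (d x) = π c₀ then ((q ^ (γ - 1) : ℕ) : ℂ) else 0))
        = ((q ^ γ : ℕ) : ℂ) * (∑ x ∈ s.filter (fun x => d x = c₀), aE x)
          - ((q ^ (γ - 1) : ℕ) : ℂ) * (∑ x ∈ s.filter (fun x => π (d x) = π c₀), aE x) := by
      rw [Finset.mul_sum, Finset.mul_sum, Finset.sum_filter, Finset.sum_filter,
        ← Finset.sum_sub_distrib]
      refine Finset.sum_congr rfl fun x _ => ?_
      by_cases h1 : d x = c₀ <;> by_cases h2 : π (d x) = π c₀ <;>
        simp [h1, h2] <;> ring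
    rw [expand] at hsum0
    by_cases h1 : c₀ = 0
    · have h2 : π c₀ = 0 := by rw [h1, hπ0]
      simp only [h1, h2, if_true] at hsum0 ⊢
      simp only [hπ0, if_true] at hsum0 ⊢
      linear_combination hsum0
    · by_cases h2 : π c₀ = 0
      · simp only [h1, h2, if_true, if_false] at hsum0 ⊢
        linear_combination hsum0
      · simp only [h1, h2, if_false] at hsum0 ⊢
        linear_combination hsum0
  -- conclude
  have h1 := KEY c
  have h2 := KEY c'
  rw [hcc] at h1
  rw [← h2] at h1
  have hQne : ((q ^ γ : ℕ) : ℂ) ≠ 0 := by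
    simp only [ne_eq, Nat.cast_eq_zero]
    exact NeZero.ne (q ^ γ)
  exact mul_left_cancel₀ hQne h1

end Constancy
end GBFaux

open Finset Polynomial
namespace GBFaux

lemma fiber_card {q γ : ℕ} (hq : q.Prime) (hγ : 1 ≤ γ)
    [NeZero (q ^ γ)] [NeZero (q ^ (γ - 1))] (t : ZMod (q ^ (γ - 1))) :
    (Finset.univ.filter (fun c : ZMod (q ^ γ)
        => (ZMod.castHom (pow_dvd_pow q (Nat.sub_le γ 1)) (ZMod (q ^ (γ - 1)))) c = t)).card
      = q := by
  set π : ZMod (q ^ γ) →+* ZMod (q ^ (γ - 1)) :=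
    ZMod.castHom (pow_dvd_pow q (Nat.sub_le γ 1)) (ZMod (q ^ (γ - 1))) with hπdef
  have hπcast : ∀ j : ℕ, π (j : ZMod (q ^ γ)) = (j : ZMod (q ^ (γ - 1))) := fun j =>
    map_natCast π j
  have hsame : ∀ t : ZMod (q ^ (γ - 1)),
      (Finset.univ.filter (fun c : ZMod (q ^ γ) => π c = t)).card
        = (Finset.univ.filter (fun c : ZMod (q ^ γ) => π c = 0)).card := by
    intro t
    set c₀ : ZMod (q ^ γ) := ((t.val : ℕ) : ZMod (q ^ γ)) with hc₀
    have hπc₀ : π c₀ = t := by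
      rw [hc₀, hπcast, ZMod.natCast_val, ZMod.cast_id]
    refine Finset.card_bij (fun c _ => c - c₀) ?_ ?_ ?_
    · intro c hc
      simp only [mem_filter, mem_univ, true_and] at hc ⊢
      rw [map_sub, hc, hπc₀, sub_self]
    · intro a _ b _ hab
      exact sub_left_injective hab
    · intro b hb
      simp only [mem_filter, mem_univ, true_and] at hb ⊢
      exact ⟨b + c₀, by rw [map_add, hb, hπc₀, zero_add], by rw [add_sub_cancel_right]⟩
  have htot := Finset.card_eq_sum_card_fiberwise
    (f := fun c : ZMod (q ^ γ) => π c) (s := Finset.univ) (t := Finset.univ)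
    (fun x _ => mem_univ _)
  rw [Finset.card_univ, ZMod.card] at htot
  rw [Finset.sum_congr rfl (fun t _ => hsame t)] at htot
  rw [Finset.sum_const, Finset.card_univ, ZMod.card, smul_eq_mul] at htot
  have hpow : q ^ γ = q ^ (γ - 1) * q := by
    rw [← pow_succ]; congr 1; omega
  have hF : (Finset.univ.filter (fun c : ZMod (q ^ γ) => π c = 0)).card = q := by
    refine Nat.eq_of_mul_eq_mul_left
      (Nat.pos_of_ne_zero (pow_ne_zero (γ - 1) hq.ne_zero)) ?_
    calc q ^ (γ - 1) * (Finset.univ.filter (fun c : ZMod (q ^ γ) => π c = 0)).card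
        = q ^ γ := htot.symm
      _ = q ^ (γ - 1) * q := hpow
  exact (hsame t).trans hF

end GBFaux

open Finset Polynomial
namespace GBFaux

lemma abs_one_of_prim {M : ℕ} [NeZero M] {η : ℂ} (hη : IsPrimitiveRoot η M) (w : ZMod M) :
    (η ^ w.val) * (starRingEnd ℂ) (η ^ w.val) = 1 := by
  rw [Complex.mul_conj]
  norm_cast
  have h1 : ‖η ^ w.val‖ ^ M = 1 := by
    rw [← norm_pow, ← pow_mul, Nat.mul_comm, pow_mul, hη.pow_eq_one, one_pow, norm_one]
  have h2 : ‖η ^ w.val‖ = 1 := by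
    have h0 : (0 : ℝ) ≤ ‖η ^ w.val‖ := norm_nonneg _
    rcases lt_trichotomy (‖η ^ w.val‖) 1 with hlt | heq | hgt
    · exfalso
      have := pow_lt_one₀ h0 hlt (NeZero.ne M)
      rw [h1] at this
      exact lt_irrefl 1 this
    · exact heq
    · exfalso
      have := one_lt_pow₀ hgt (NeZero.ne M)
      rw [h1] at this
      exact lt_irrefl 1 this
  rw [Complex.normSq_eq_norm_sq, h2]
  norm_num

/-- If `z` and `z - 1` are both roots of unity of odd order, contradiction. -/
lemma no_sixth_root {M : ℕ} [NeZero M] (hModd : Odd M) {η : ℂ} (hη : IsPrimitiveRoot η M)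
    (w w' : ZMod M) (heq : η ^ w'.val = η ^ w.val - 1) : False := by
  set z : ℂ := η ^ w.val with hz
  have hc1 : z * (starRingEnd ℂ) z = 1 := abs_one_of_prim hη w
  have hc2 : (z - 1) * (starRingEnd ℂ) (z - 1) = 1 := by
    rw [← heq]; exact abs_one_of_prim hη w'
  have hconj : (starRingEnd ℂ) (z - 1) = (starRingEnd ℂ) z - 1 := by
    rw [map_sub, map_one]
  rw [hconj] at hc2
  -- z + conj z = 1, z * conj z = 1  ⇒  z^2 = z - 1
  have hsum : z + (starRingEnd ℂ) z = 1 := by linear_combination hc1 - hc2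
  have hz2 : z ^ 2 = z - 1 := by
    have : (starRingEnd ℂ) z = 1 - z := by linear_combination hsum
    rw [this] at hc1
    linear_combination -hc1
  have hz3 : z ^ 3 = -1 := by
    have : z ^ 3 = z * z ^ 2 := by ring
    rw [this, hz2, mul_sub, mul_one, ← pow_two, hz2]
    ring
  have hz6 : z ^ 6 = 1 := by
    have : z ^ 6 = (z ^ 3) ^ 2 := by ring
    rw [this, hz3]; ring
  have hzM : z ^ M = 1 := by
    rw [hz, ← pow_mul, Nat.mul_comm, pow_mul, hη.pow_eq_one, one_pow]
  have hgcd : z ^ Nat.gcd 6 M = 1 := pow_gcd_eq_one.mpr ⟨hz6, hzM⟩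
  have hd6 : Nat.gcd 6 M ∣ 6 := Nat.gcd_dvd_left _ _
  have hdM : Nat.gcd 6 M ∣ M := Nat.gcd_dvd_right _ _
  have hdodd : ¬ 2 ∣ Nat.gcd 6 M := by
    intro h2
    have : (2 : ℕ) ∣ M := h2.trans hdM
    rw [Nat.odd_iff] at hModd
    omega
  have hd3 : Nat.gcd 6 M ∣ 3 := by
    have hle : Nat.gcd 6 M ≤ 6 := Nat.le_of_dvd (by norm_num) hd6
    interval_cases h : Nat.gcd 6 M <;> revert hd6 hdodd <;> decide
  have hz3' : z ^ 3 = 1 := by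
    obtain ⟨e, he⟩ := hd3
    rw [he, pow_mul, hgcd, one_pow]
  rw [hz3'] at hz3
  norm_num at hz3

end GBFaux

open Finset Polynomial
namespace GBFaux

universe u

lemma LL (M : ℕ) : Odd M → M ≠ 0 → ∀ {η : ℂ}, IsPrimitiveRoot η M →
    ∀ {A : Type u} [DecidableEq A] (s : Finset A) (g : A → ZMod M),
      (((∑ x ∈ s, η ^ (g x).val) = 0 → s.Nonempty → 2 ≤ M ∧ M.minFac ≤ s.card)
      ∧ ((∑ x ∈ s, η ^ (g x).val) = 1 → s.card ≤ M.minFac → ∃ x ∈ s, g x = 0)) := by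
  induction M using Nat.strong_induction_on with
  | _ M IH =>
  intro hModd hM0 η hη A instA s g
  haveI : NeZero M := ⟨hM0⟩
  by_cases hM1 : M = 1
  · -- base case M = 1
    subst hM1
    have hone : ∀ x : A, η ^ (g x).val = 1 := by
      intro x
      have hlt := ZMod.val_lt (g x)
      have h0 : (g x).val = 0 := by omega
      rw [h0, pow_zero]
    constructor
    · intro hrel hne
      rw [Finset.sum_congr rfl (fun x _ => hone x), Finset.sum_const, nsmul_eq_mul,
        mul_one] at hrel
      have : s.card = 0 := by exact_mod_cast hrel
      exact absurd (Finset.card_eq_zero.mp this) hne.ne_empty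
    · intro hrel _
      rw [Finset.sum_congr rfl (fun x _ => hone x), Finset.sum_const, nsmul_eq_mul,
        mul_one] at hrel
      have hc : s.card = 1 := by exact_mod_cast hrel
      obtain ⟨x, hx⟩ := Finset.card_eq_one.mp hc
      exact ⟨x, by rw [hx]; exact Finset.mem_singleton_self x, Subsingleton.elim _ _⟩
  · -- inductive step, M > 1
    have hM2 : 2 ≤ M := by omega
    have hℓp : (M.minFac).Prime := Nat.minFac_prime hM1
    set ℓ := M.minFac with hℓdef
    have hℓ2 : 2 ≤ ℓ := hℓp.two_le
    have hℓodd : ℓ ≠ 2 := by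
      intro h2
      have : (2 : ℕ) ∣ M := h2 ▸ Nat.minFac_dvd M
      rw [Nat.odd_iff] at hModd
      omega
    have hℓ3 : 3 ≤ ℓ := by
      rcases Nat.lt_or_ge ℓ 3 with h | h
      · interval_cases ℓ <;> simp_all
      · exact h
    set γ := M.factorization ℓ with hγdef
    have hγ1 : 1 ≤ γ := hℓp.factorization_pos_of_dvd hM0 (Nat.minFac_dvd M)
    set M' := M / ℓ ^ γ with hM'def
    have hMM' : M = M' * ℓ ^ γ := by
      rw [hM'def, Nat.div_mul_cancel (Nat.ordProj_dvd M ℓ)]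
    have hnd : ¬ ℓ ∣ M' := Nat.not_dvd_ordCompl hℓp hM0
    have hcop : M'.Coprime (ℓ ^ γ) :=
      Nat.Coprime.pow_right γ ((hℓp.coprime_iff_not_dvd.mpr hnd).symm)
    have hM'0 : M' ≠ 0 := by
      intro h
      rw [h, zero_mul] at hMM'
      exact hM0 hMM'
    haveI : NeZero M' := ⟨hM'0⟩
    haveI : NeZero (ℓ ^ γ) := ⟨pow_ne_zero _ hℓp.ne_zero⟩
    haveI : NeZero (ℓ ^ (γ - 1)) := ⟨pow_ne_zero _ hℓp.ne_zero⟩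
    have hℓγ1 : 1 < ℓ ^ γ := by
      calc 1 < ℓ := hℓp.one_lt
        _ ≤ ℓ ^ γ := Nat.le_self_pow (by omega) ℓ
    have hM'lt : M' < M := by
      rw [hMM']
      exact Nat.lt_mul_iff_one_lt_right (Nat.pos_of_ne_zero hM'0) |>.mpr hℓγ1
    have hM'odd : Odd M' := by
      rw [Nat.odd_iff] at hModd ⊢
      have hdvd : M' ∣ M := Dvd.intro _ hMM'.symm
      rcases Nat.even_or_odd M' with he | ho
      · exfalso
        have h2 : (2 : ℕ) ∣ M' := even_iff_two_dvd.mp he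
        have h2' : (2 : ℕ) ∣ M := h2.trans hdvd
        omega
      · rwa [Nat.odd_iff] at ho
    have hη' : IsPrimitiveRoot (η ^ (ℓ ^ γ)) M' :=
      hη.pow (Nat.pos_of_ne_zero hM0) (by rw [hMM', Nat.mul_comm])
    have hminfacM' : M' ≠ 1 → ℓ ≤ M'.minFac := by
      intro h1
      refine Nat.minFac_le_of_dvd (Nat.minFac_prime h1).two_le ?_
      exact (Nat.minFac_dvd M').trans (Dvd.intro _ hMM'.symm)
    -- class machinery
    set π : ZMod (ℓ ^ γ) → ZMod (ℓ ^ (γ - 1)) :=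
      ⇑(ZMod.castHom (pow_dvd_pow ℓ (Nat.sub_le γ 1)) (ZMod (ℓ ^ (γ - 1)))) with hπdef
    set dF : A → ZMod (ℓ ^ γ) := fun x => dComp M' (ℓ ^ γ) M hMM' hcop (g x) with hdF
    set aF : A → ZMod M' := fun x => aComp M' (ℓ ^ γ) M hMM' hcop (g x) with haF
    set η' : ℂ := η ^ (ℓ ^ γ) with hη'def
    have hπ0 : π (0 : ZMod (ℓ ^ γ)) = 0 := by rw [hπdef]; exact map_zero _
    have hfiberwise : s.card = ∑ c : ZMod (ℓ ^ γ), (s.filter (fun x => dF x = c)).card :=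
      Finset.card_eq_sum_card_fiberwise (fun x _ => mem_univ _)
    constructor
    · -- (M2) branch
      intro hrel hne
      refine ⟨hM2, ?_⟩
      have hrel0 : (∑ x ∈ s, η ^ (g x).val) + ((0 : ℤ) : ℂ) = 0 := by
        rw [hrel]; norm_num
      obtain ⟨x₀, hx₀⟩ := hne
      set c₀ := dF x₀ with hc₀
      by_cases hall : ∀ c : ZMod (ℓ ^ γ), π c = π c₀ →
          (s.filter (fun x => dF x = c)).Nonempty
      · -- all classes in the fiber of c₀ are nonempty: count
        have hge : ∑ c ∈ univ.filter (fun c : ZMod (ℓ ^ γ) => π c = π c₀), 1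
            ≤ ∑ c ∈ univ.filter (fun c : ZMod (ℓ ^ γ) => π c = π c₀),
              (s.filter (fun x => dF x = c)).card := by
          refine Finset.sum_le_sum ?_
          intro c hc
          rw [mem_filter] at hc
          exact Finset.card_pos.mpr (hall c hc.2)
        have hsub : ∑ c ∈ univ.filter (fun c : ZMod (ℓ ^ γ) => π c = π c₀),
              (s.filter (fun x => dF x = c)).card
            ≤ ∑ c : ZMod (ℓ ^ γ), (s.filter (fun x => dF x = c)).card :=
          Finset.sum_le_sum_of_subset (filter_subset _ _)
        have hfc : (univ.filter (fun c : ZMod (ℓ ^ γ) => π c = π c₀)).card = ℓ :=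
          fiber_card hℓp hγ1 (π c₀)
        rw [Finset.sum_const, smul_eq_mul, mul_one, hfc] at hge
        omega
      · push_neg at hall
        obtain ⟨c₁, hπc₁, hc₁emp⟩ := hall
        have hCC : ((∑ x ∈ s.filter (fun x => dF x = c₀), η' ^ ((aF x).val))
              + (if c₀ = 0 then ((0 : ℤ) : ℂ) else 0))
            = ((∑ x ∈ s.filter (fun x => dF x = c₁), η' ^ ((aF x).val))
              + (if c₁ = 0 then ((0 : ℤ) : ℂ) else 0)) :=
          coset_constancy hℓp hγ1 hMM' hcop hη s g 0 hrel0 c₀ c₁ hπc₁.symm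
        rw [hc₁emp, Finset.sum_empty] at hCC
        simp only [Int.cast_zero, ite_self, add_zero, zero_add] at hCC
        have hT0 : ∑ x ∈ s.filter (fun x => dF x = c₀), η' ^ ((aF x).val) = 0 := hCC
        have hmem : x₀ ∈ s.filter (fun x => dF x = c₀) :=
          mem_filter.mpr ⟨hx₀, rfl⟩
        have hIH1 := (IH M' hM'lt hM'odd hM'0 hη'
          (s.filter (fun x => dF x = c₀)) (fun x => aF x)).1 hT0 ⟨x₀, hmem⟩
        have hle1 : ℓ ≤ M'.minFac := hminfacM' (by omega)
        have hle2 : (s.filter (fun x => dF x = c₀)).card ≤ s.card :=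
          Finset.card_le_card (filter_subset _ _)
        omega
    · -- (M1) branch
      intro hrel hcard
      have hrel1 : (∑ x ∈ s, η ^ (g x).val) + ((-1 : ℤ) : ℂ) = 0 := by
        rw [hrel]; norm_num
      by_cases hall : ∀ c : ZMod (ℓ ^ γ), π c = 0 → c ≠ 0 →
          (s.filter (fun x => dF x = c)).Nonempty
      · -- case (ii)
        exfalso
        set F := univ.filter (fun c : ZMod (ℓ ^ γ) => π c = 0) with hF
        have hFcard : F.card = ℓ := fiber_card hℓp hγ1 0
        have h0F : (0 : ZMod (ℓ ^ γ)) ∈ F := mem_filter.mpr ⟨mem_univ _, hπ0⟩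
        by_cases hB₀ : (s.filter (fun x => dF x = 0)).Nonempty
        · -- every class in F nonempty, all singletons, derive sixth root contradiction
          have hallfull : ∀ c ∈ F, (s.filter (fun x => dF x = c)).Nonempty := by
            intro c hc
            rw [hF, mem_filter] at hc
            by_cases h0 : c = 0
            · rw [h0]; exact hB₀
            · exact hall c hc.2 h0
          have hge : ∀ c ∈ F, 1 ≤ (s.filter (fun x => dF x = c)).card := fun c hc =>
            Finset.card_pos.mpr (hallfull c hc)
          have hsub : ∑ c ∈ F, (s.filter (fun x => dF x = c)).card
              ≤ ∑ c : ZMod (ℓ ^ γ), (s.filter (fun x => dF x = c)).card :=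
            Finset.sum_le_sum_of_subset (filter_subset _ _)
          have hsum1 : ∑ c ∈ F, 1 ≤ ∑ c ∈ F, (s.filter (fun x => dF x = c)).card :=
            Finset.sum_le_sum hge
          rw [Finset.sum_const, smul_eq_mul, mul_one, hFcard] at hsum1
          -- equality forced
          have heq : ∑ c ∈ F, (s.filter (fun x => dF x = c)).card = ∑ c ∈ F, 1 := by
            rw [Finset.sum_const, smul_eq_mul, mul_one, hFcard]
            omega
          have hone : ∀ c ∈ F, (s.filter (fun x => dF x = c)).card = 1 := by
            intro c hc
            by_contra hne1
            have h2 : 2 ≤ (s.filter (fun x => dF x = c)).card := by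
              have := hge c hc
              omega
            have hlt : ∑ c ∈ F, 1 < ∑ c ∈ F, (s.filter (fun x => dF x = c)).card :=
              Finset.sum_lt_sum hge ⟨c, hc, by omega⟩
            omega
          obtain ⟨x₀', hx₀'⟩ := Finset.card_eq_one.mp (hone 0 h0F)
          have hFene : (F.erase 0).Nonempty := by
            rw [← Finset.card_pos, Finset.card_erase_of_mem h0F, hFcard]
            omega
          obtain ⟨c₁, hc₁⟩ := hFene
          have hc₁ne : c₁ ≠ 0 := (Finset.mem_erase.mp hc₁).1
          have hc₁F : c₁ ∈ F := Finset.mem_of_mem_erase hc₁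
          obtain ⟨x₁, hx₁⟩ := Finset.card_eq_one.mp (hone c₁ hc₁F)
          have hπc₁0 : π c₁ = π 0 := by
            rw [hπ0]
            exact (mem_filter.mp hc₁F).2
          have hCC : ((∑ x ∈ s.filter (fun x => dF x = c₁), η' ^ ((aF x).val))
                + (if c₁ = 0 then ((-1 : ℤ) : ℂ) else 0))
              = ((∑ x ∈ s.filter (fun x => dF x = (0 : ZMod (ℓ ^ γ))), η' ^ ((aF x).val))
                + (if (0 : ZMod (ℓ ^ γ)) = 0 then ((-1 : ℤ) : ℂ) else 0)) :=
            coset_constancy hℓp hγ1 hMM' hcop hη s g (-1) hrel1 c₁ 0 hπc₁0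
          rw [hx₀', hx₁, Finset.sum_singleton, Finset.sum_singleton, if_neg hc₁ne,
            if_pos rfl, add_zero] at hCC
          refine no_sixth_root hM'odd hη' (aF x₀') (aF x₁) ?_
          push_cast at hCC
          linear_combination hCC
        · -- B₀ empty: each nonzero class in the fiber has ≥ minFac M' - 1 ≥ ℓ - 1 elements
          rw [Finset.not_nonempty_iff_eq_empty] at hB₀
          have hclass : ∀ c ∈ F.erase 0, 2 ≤ (s.filter (fun x => dF x = c)).card := by
            intro c hc
            have hc0 : c ≠ 0 := (Finset.mem_erase.mp hc).1
            have hcF : π c = 0 := (mem_filter.mp (Finset.mem_of_mem_erase hc)).2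
            have hCC : ((∑ x ∈ s.filter (fun x => dF x = c), η' ^ ((aF x).val))
                  + (if c = 0 then ((-1 : ℤ) : ℂ) else 0))
                = ((∑ x ∈ s.filter (fun x => dF x = (0 : ZMod (ℓ ^ γ))), η' ^ ((aF x).val))
                  + (if (0 : ZMod (ℓ ^ γ)) = 0 then ((-1 : ℤ) : ℂ) else 0)) :=
              coset_constancy hℓp hγ1 hMM' hcop hη s g (-1) hrel1 c 0 (show π c = π 0 by rw [hπ0, hcF])
            rw [hB₀, Finset.sum_empty, if_neg hc0, if_pos rfl] at hCC
            -- Option trick: add an artificial term 1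
            have hnonemem : (none : Option A) ∉
                (s.filter (fun x => dF x = c)).map Function.Embedding.some := by
              simp
            set s' : Finset (Option A) :=
              insert none ((s.filter (fun x => dF x = c)).map Function.Embedding.some) with hs'
            set g' : Option A → ZMod M' := fun o => o.elim 0 (fun x => aF x) with hg'
            have hcs : ∑ x ∈ s.filter (fun x => dF x = c), η' ^ ((aF x).val) = -1 := by
              push_cast at hCC
              linear_combination hCC
            have hrel' : ∑ y ∈ s', η' ^ ((g' y).val) = 0 := by
              rw [hs', Finset.sum_insert hnonemem, Finset.sum_map]
              have e1 : (g' none).val = 0 := by rw [hg']; simp [ZMod.val_zero]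
              have e2 : ∀ x : A, g' (Function.Embedding.some x) = aF x := by
                intro x; rw [hg']; rfl
              rw [e1, pow_zero]
              rw [Finset.sum_congr rfl (fun x _ => by rw [e2 x])]
              rw [hcs]
              norm_num
            have hne' : s'.Nonempty := ⟨none, mem_insert_self _ _⟩
            have hIH2 := (IH M' hM'lt hM'odd hM'0 hη' s' g').1 hrel' hne'
            have hcard' : s'.card = (s.filter (fun x => dF x = c)).card + 1 := by
              rw [hs', Finset.card_insert_of_notMem hnonemem, Finset.card_map]
            have hle1 : ℓ ≤ M'.minFac := hminfacM' (by omega)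
            omega
          -- count
          have hsub : ∑ c ∈ F.erase 0, (s.filter (fun x => dF x = c)).card
              ≤ ∑ c : ZMod (ℓ ^ γ), (s.filter (fun x => dF x = c)).card :=
            Finset.sum_le_sum_of_subset ((Finset.erase_subset _ _).trans (filter_subset _ _))
          have hsum2 : ∑ c ∈ F.erase 0, 2 ≤ ∑ c ∈ F.erase 0,
              (s.filter (fun x => dF x = c)).card := Finset.sum_le_sum hclass
          rw [Finset.sum_const, smul_eq_mul, Finset.card_erase_of_mem h0F, hFcard] at hsum2
          omega
      · -- case (i): some nonzero class in the zero fiber is empty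
        push_neg at hall
        obtain ⟨c₁, hπc₁, hc₁ne, hc₁emp⟩ := hall
        have hCC : ((∑ x ∈ s.filter (fun x => dF x = (0 : ZMod (ℓ ^ γ))), η' ^ ((aF x).val))
              + (if (0 : ZMod (ℓ ^ γ)) = 0 then ((-1 : ℤ) : ℂ) else 0))
            = ((∑ x ∈ s.filter (fun x => dF x = c₁), η' ^ ((aF x).val))
              + (if c₁ = 0 then ((-1 : ℤ) : ℂ) else 0)) :=
          coset_constancy hℓp hγ1 hMM' hcop hη s g (-1) hrel1 0 c₁ (show π 0 = π c₁ by rw [hπ0, hπc₁])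
        rw [hc₁emp, Finset.sum_empty, if_neg hc₁ne, if_pos rfl] at hCC
        have hB₀rel : ∑ x ∈ s.filter (fun x => dF x = (0 : ZMod (ℓ ^ γ))),
            η' ^ ((aF x).val) = 1 := by
          push_cast at hCC
          linear_combination hCC
        by_cases hM'1 : M' = 1
        · -- trivial small case
          have hone' : ∀ x : A, η' ^ ((aF x).val) = 1 := by
            intro x
            have hlt : (aF x).val < 1 := by
              rw [← hM'1]; exact ZMod.val_lt (aF x)
            have h0 : (aF x).val = 0 := by omega
            rw [h0, pow_zero]
          rw [Finset.sum_congr rfl (fun x _ => hone' x), Finset.sum_const, nsmul_eq_mul,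
            mul_one] at hB₀rel
          have hc1 : (s.filter (fun x => dF x = (0 : ZMod (ℓ ^ γ)))).card = 1 := by
            exact_mod_cast hB₀rel
          obtain ⟨x₀, hx₀eq⟩ := Finset.card_eq_one.mp hc1
          have hx₀mem : x₀ ∈ s.filter (fun x => dF x = (0 : ZMod (ℓ ^ γ))) := by
            rw [hx₀eq]; exact Finset.mem_singleton_self x₀
          rw [mem_filter] at hx₀mem
          refine ⟨x₀, hx₀mem.1, ?_⟩
          refine comp_eq_zero hMM' hcop (g x₀) ?_ hx₀mem.2
          rw [← ZMod.val_eq_zero]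
          show (aF x₀).val = 0
          have hlt : (aF x₀).val < 1 := by
            rw [← hM'1]; exact ZMod.val_lt (aF x₀)
          omega
        · have hIH3 := (IH M' hM'lt hM'odd hM'0 hη'
            (s.filter (fun x => dF x = (0 : ZMod (ℓ ^ γ)))) (fun x => aF x)).2 hB₀rel
            (by
              have h1 : (s.filter (fun x => dF x = (0 : ZMod (ℓ ^ γ)))).card ≤ s.card :=
                Finset.card_le_card (filter_subset _ _)
              have h2 : ℓ ≤ M'.minFac := hminfacM' hM'1
              omega)
          obtain ⟨x₀, hx₀mem, hx₀a⟩ := hIH3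
          rw [mem_filter] at hx₀mem
          exact ⟨x₀, hx₀mem.1, comp_eq_zero hMM' hcop (g x₀) hx₀a hx₀mem.2⟩

end GBFaux

open Finset Polynomial
namespace GBFaux

lemma two_x_zero {N : ℕ} [NeZero N] (hNodd : Odd N) (x : ZMod N) (hx : x + x = 0) :
    x = 0 := by
  have hcop2 : Nat.Coprime 2 N := Nat.coprime_two_left.mpr hNodd
  have h2 : ((2 : ℕ) : ZMod N) * x = 0 := by
    push_cast
    rw [two_mul]
    exact hx
  rw [show ((2 : ℕ) : ZMod N) = ↑(ZMod.unitOfCoprime 2 hcop2) from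
    (ZMod.coe_unitOfCoprime 2 hcop2).symm] at h2
  exact (Units.mul_right_eq_zero _).mp h2

lemma descent_core {M q γ m : ℕ} (hq : q.Prime) (hγ : 1 ≤ γ) (hm : m = M * q ^ γ)
    (hcop : M.Coprime (q ^ γ)) (hModd : Odd M) (hqodd : Odd q) (hM1 : 1 < M)
    (hpq : M.minFac ≤ q)
    {ζ : ℂ} (hζ : IsPrimitiveRoot ζ m)
    {G : Type} [AddCommGroup G] [Fintype G] [DecidableEq G]
    (hGcard : Fintype.card G < M.minFac + q)
    (h2 : ∀ x : G, x + x = 0)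
    (z : G) (hz : z ≠ 0)
    (g : G → ZMod m) (hgz : ∀ x, g (x + z) = - g x)
    (hrel : ∑ x : G, ζ ^ ((g x).val) = 0) :
    ∑ x : G, (ζ ^ (q ^ γ)) ^ ((aComp M (q ^ γ) m hm hcop (g x)).val) = 0 := by
  haveI : NeZero M := ⟨by omega⟩
  haveI : NeZero (q ^ γ) := ⟨pow_ne_zero _ hq.ne_zero⟩
  haveI : NeZero (q ^ (γ - 1)) := ⟨pow_ne_zero _ hq.ne_zero⟩
  haveI : NeZero m := ⟨by rw [hm]; exact Nat.mul_ne_zero (NeZero.ne M) (NeZero.ne _)⟩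
  have hmpos : 0 < m := Nat.pos_of_ne_zero (NeZero.ne m)
  have hM0 : M ≠ 0 := NeZero.ne M
  set p := M.minFac with hpdef
  have hpprime : p.Prime := Nat.minFac_prime (by omega)
  set π : ZMod (q ^ γ) → ZMod (q ^ (γ - 1)) :=
    ⇑(ZMod.castHom (pow_dvd_pow q (Nat.sub_le γ 1)) (ZMod (q ^ (γ - 1)))) with hπdef
  have hπ0 : π (0 : ZMod (q ^ γ)) = 0 := by rw [hπdef]; exact map_zero _
  set dF : G → ZMod (q ^ γ) := fun x => dComp M (q ^ γ) m hm hcop (g x) with hdF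
  set aF : G → ZMod M := fun x => aComp M (q ^ γ) m hm hcop (g x) with haF
  set η' : ℂ := ζ ^ (q ^ γ) with hη'def
  have hη' : IsPrimitiveRoot η' M := hζ.pow hmpos (by rw [hm, Nat.mul_comm])
  set C : ZMod (q ^ γ) → Finset G := fun c => univ.filter (fun x => dF x = c) with hC
  set T : ZMod (q ^ γ) → ℂ := fun c => ∑ x ∈ C c, η' ^ ((aF x).val) with hT
  have hrel0 : (∑ x ∈ (univ : Finset G), ζ ^ ((g x).val)) + ((0 : ℤ) : ℂ) = 0 := by
    rw [hrel]; norm_num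
  have CC : ∀ c c' : ZMod (q ^ γ), π c = π c' → T c = T c' := by
    intro c c' hcc
    have hCC : ((∑ x ∈ univ.filter (fun x : G => dF x = c), η' ^ ((aF x).val))
          + (if c = 0 then ((0 : ℤ) : ℂ) else 0))
        = ((∑ x ∈ univ.filter (fun x : G => dF x = c'), η' ^ ((aF x).val))
          + (if c' = 0 then ((0 : ℤ) : ℂ) else 0)) :=
      coset_constancy hq hγ hm hcop hζ univ g 0 hrel0 c c' hcc
    simp only [Int.cast_zero, ite_self, add_zero] at hCC
    exact hCC
  suffices hall0 : ∀ c : ZMod (q ^ γ), T c = 0 by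
    have hfib := Finset.sum_fiberwise (univ : Finset G) dF (fun x => η' ^ ((aF x).val))
    rw [← hfib]
    exact Finset.sum_eq_zero (fun c _ => hall0 c)
  by_contra hcon
  push_neg at hcon
  obtain ⟨cs, hcs⟩ := hcon
  set F : Finset (ZMod (q ^ γ)) := univ.filter (fun c => π c = π cs) with hFdef
  have hFcard : F.card = q := fiber_card hq hγ (π cs)
  have hTF : ∀ c ∈ F, T c = T cs := fun c hc => CC c cs (mem_filter.mp hc).2
  have hnonempty : ∀ c ∈ F, (C c).Nonempty := by
    intro c hc
    rw [Finset.nonempty_iff_ne_empty]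
    intro hemp
    apply hcs
    rw [← hTF c hc]
    show (∑ x ∈ C c, η' ^ ((aF x).val)) = 0
    rw [hemp]
    exact Finset.sum_empty
  have htotal : Fintype.card G = ∑ c : ZMod (q ^ γ), (C c).card := by
    rw [← Finset.card_univ]
    exact Finset.card_eq_sum_card_fiberwise (fun x _ => mem_univ _)
  have hsubF : ∑ c ∈ F, (C c).card ≤ Fintype.card G := by
    rw [htotal]
    exact Finset.sum_le_sum_of_subset (filter_subset _ _)
  have hsing : ∃ c₁ ∈ F, (C c₁).card = 1 := by
    by_contra hno
    push_neg at hno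
    have h2le : ∀ c ∈ F, 2 ≤ (C c).card := by
      intro c hc
      have h1 := Finset.card_pos.mpr (hnonempty c hc)
      have := hno c hc
      omega
    have hge2 : ∑ c ∈ F, 2 ≤ ∑ c ∈ F, (C c).card := Finset.sum_le_sum h2le
    rw [Finset.sum_const, smul_eq_mul, hFcard, Nat.mul_comm] at hge2
    omega
  obtain ⟨c₁, hc₁F, hc₁⟩ := hsing
  obtain ⟨x₁, hx₁⟩ := Finset.card_eq_one.mp hc₁
  have hTc₁ : T c₁ = η' ^ ((aF x₁).val) := by
    show (∑ x ∈ C c₁, η' ^ ((aF x).val)) = η' ^ ((aF x₁).val)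
    rw [hx₁, Finset.sum_singleton]
  have hallone : ∀ c ∈ F, (C c).card = 1 := by
    intro c hc
    have hbound : (C c).card ≤ p := by
      have hsplit : ∑ c' ∈ F, (C c').card
          = (C c).card + ∑ c' ∈ F.erase c, (C c').card :=
        (Finset.add_sum_erase F _ hc).symm
      have hge : (F.erase c).card ≤ ∑ c' ∈ F.erase c, (C c').card := by
        calc (F.erase c).card = ∑ _c' ∈ F.erase c, 1 := by
              rw [Finset.sum_const, smul_eq_mul, mul_one]
          _ ≤ ∑ c' ∈ F.erase c, (C c').card :=
              Finset.sum_le_sum (fun c' hc' =>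
                Finset.card_pos.mpr (hnonempty c' (Finset.mem_of_mem_erase hc')))
      have hec : (F.erase c).card = q - 1 := by
        rw [Finset.card_erase_of_mem hc, hFcard]
      have hq1 : 1 ≤ q := hq.pos
      omega
    have hTeq : (∑ x ∈ C c, η' ^ ((aF x).val)) = η' ^ ((aF x₁).val) := by
      rw [show (∑ x ∈ C c, η' ^ ((aF x).val)) = T c from rfl,
        hTF c hc, ← hTF c₁ hc₁F, hTc₁]
    have hsum1 : ∑ x ∈ C c, η' ^ ((aF x - aF x₁).val) = 1 := by
      have hterm : ∀ x : G, η' ^ ((aF x - aF x₁).val)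
          = η' ^ ((aF x).val) * η' ^ ((-(aF x₁) : ZMod M).val) := by
        intro x
        rw [sub_eq_add_neg, pow_val_add hη']
      rw [Finset.sum_congr rfl (fun x _ => hterm x), ← Finset.sum_mul, hTeq,
        ← pow_val_add hη', add_neg_cancel]
      exact pow_val_zero hη'
    have hLL := (LL M hModd hM0 hη' (C c) (fun x => aF x - aF x₁)).2 hsum1 hbound
    obtain ⟨xh, hxhmem, hxh⟩ := hLL
    have hsplit2 : ∑ x ∈ (C c).erase xh, η' ^ ((aF x - aF x₁).val) = 0 := by
      have hadd := Finset.add_sum_erase (C c) (fun x => η' ^ ((aF x - aF x₁).val)) hxhmem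
      rw [hxh, pow_val_zero hη', hsum1] at hadd
      linear_combination hadd
    have herase : (C c).erase xh = ∅ := by
      by_contra hne
      have hne' : ((C c).erase xh).Nonempty := Finset.nonempty_iff_ne_empty.mpr hne
      have hLL2 := (LL M hModd hM0 hη' ((C c).erase xh) (fun x => aF x - aF x₁)).1
        hsplit2 hne'
      have hcarde : ((C c).erase xh).card = (C c).card - 1 :=
        Finset.card_erase_of_mem hxhmem
      have hcp := Finset.card_pos.mpr (hnonempty c hc)
      omega
    have h1 := Finset.card_erase_of_mem hxhmem
    rw [herase, Finset.card_empty] at h1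
    have h2' := Finset.card_pos.mpr (hnonempty c hc)
    omega
  -- pairing x ↦ x + z
  have hpair : ∀ c : ZMod (q ^ γ), Finset.image (· + z) (C c) = C (-c) := by
    intro c
    ext y
    simp only [hC, Finset.mem_image, mem_filter, mem_univ, true_and]
    constructor
    · rintro ⟨x, hx, rfl⟩
      show dComp M (q ^ γ) m hm hcop (g (x + z)) = -c
      rw [hgz x, dComp_neg]
      have hx' : dComp M (q ^ γ) m hm hcop (g x) = c := hx
      rw [hx']
    · intro hy
      refine ⟨y + z, ?_, ?_⟩
      · show dComp M (q ^ γ) m hm hcop (g (y + z)) = c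
        rw [hgz y, dComp_neg]
        have hy' : dComp M (q ^ γ) m hm hcop (g y) = -c := hy
        rw [hy', neg_neg]
      · rw [add_assoc, h2 z, add_zero]
  have hsymm : π cs = - π cs := by
    by_contra hne
    set F' : Finset (ZMod (q ^ γ)) := univ.filter (fun c => π c = - π cs) with hF'def
    have hF'card : F'.card = q := fiber_card hq hγ (- π cs)
    have hdisj : Disjoint F F' := by
      rw [Finset.disjoint_left]
      intro a haF haF'
      exact hne ((mem_filter.mp haF).2.symm.trans (mem_filter.mp haF').2)
    have hnonempty' : ∀ c ∈ F', (C c).Nonempty := by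
      intro c hc
      have hmem : -c ∈ F := by
        rw [hFdef, mem_filter]
        refine ⟨mem_univ _, ?_⟩
        have hcv : π c = - π cs := (mem_filter.mp hc).2
        have hnegc : π (-c) = - π c := by rw [hπdef]; exact map_neg _ c
        rw [hnegc, hcv, neg_neg]
      obtain ⟨x, hx⟩ := hnonempty (-c) hmem
      have himg := hpair (-c)
      rw [neg_neg] at himg
      refine ⟨x + z, ?_⟩
      rw [← himg]
      exact Finset.mem_image_of_mem _ hx
    have hgeU : (F ∪ F').card ≤ ∑ c ∈ F ∪ F', (C c).card := by
      calc (F ∪ F').card = ∑ _c ∈ F ∪ F', 1 := by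
            rw [Finset.sum_const, smul_eq_mul, mul_one]
        _ ≤ ∑ c ∈ F ∪ F', (C c).card := by
            refine Finset.sum_le_sum ?_
            intro c hc
            rcases Finset.mem_union.mp hc with h | h
            · exact Finset.card_pos.mpr (hnonempty c h)
            · exact Finset.card_pos.mpr (hnonempty' c h)
    have hsubU : ∑ c ∈ F ∪ F', (C c).card ≤ Fintype.card G := by
      rw [htotal]
      exact Finset.sum_le_sum_of_subset (fun c _ => mem_univ c)
    rw [Finset.card_union_of_disjoint hdisj, hFcard, hF'card] at hgeU
    omega
  have hπcs0 : π cs = 0 := by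
    refine two_x_zero (hqodd.pow) (π cs) ?_
    nth_rewrite 2 [hsymm]
    exact add_neg_cancel _
  have h0F : (0 : ZMod (q ^ γ)) ∈ F := by
    rw [hFdef, mem_filter]
    exact ⟨mem_univ _, by rw [hπ0, hπcs0]⟩
  obtain ⟨x₀, hx₀⟩ := Finset.card_eq_one.mp (hallone 0 h0F)
  have hx₀z : x₀ + z ∈ C (0 : ZMod (q ^ γ)) := by
    have himg := hpair 0
    rw [neg_zero] at himg
    rw [← himg]
    apply Finset.mem_image_of_mem
    rw [hx₀]
    exact Finset.mem_singleton_self _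
  rw [hx₀, Finset.mem_singleton] at hx₀z
  exact hz (by
    have := hx₀z
    exact add_eq_left.mp this)

end GBFaux

open Finset Polynomial
namespace GBFaux

lemma neg_one_pow_mod (a : ℕ) : ((-1 : ℂ)) ^ (a % 2) = (-1 : ℂ) ^ a := by
  conv_rhs => rw [← Nat.mod_add_div a 2, pow_add, pow_mul]
  norm_num

lemma neg_one_pow_congr {a b : ℕ} (h : a ≡ b [MOD 2]) : ((-1 : ℂ)) ^ a = (-1 : ℂ) ^ b := by
  rw [← neg_one_pow_mod a, ← neg_one_pow_mod b]
  exact congrArg ((-1 : ℂ) ^ ·) h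

section Fourier

variable {n : ℕ}

/-- The sign character. -/
noncomputable def eps (y x : Fin n → ZMod 2) : ℂ :=
  (-1 : ℂ) ^ (∑ i : Fin n, (y i).val * (x i).val)

lemma G_add_self (x : Fin n → ZMod 2) : x + x = 0 := by
  funext i
  show x i + x i = 0
  have : ∀ b : ZMod 2, b + b = 0 := by decide
  exact this (x i)

lemma sum_modEq {ι : Type*} (s : Finset ι) (f g : ι → ℕ) (k : ℕ)
    (h : ∀ i ∈ s, f i ≡ g i [MOD k]) : (∑ i ∈ s, f i) ≡ (∑ i ∈ s, g i) [MOD k] := by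
  classical
  induction s using Finset.induction_on with
  | empty => rfl
  | insert _ _ hx ih =>
    rw [Finset.sum_insert hx, Finset.sum_insert hx]
    exact Nat.ModEq.add (h _ (mem_insert_self _ _))
      (ih fun i hi => h i (mem_insert_of_mem hi))

lemma eps_mul (y x x' : Fin n → ZMod 2) : eps y x * eps y x' = eps y (x + x') := by
  unfold eps
  rw [← pow_add, ← Finset.sum_add_distrib]
  refine neg_one_pow_congr ?_
  have hterm : ∀ i : Fin n, (y i).val * ((x + x') i).val ≡
      (y i).val * (x i).val + (y i).val * (x' i).val [MOD 2] := by
    intro i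
    have hxi : ((x + x') i).val ≡ (x i).val + (x' i).val [MOD 2] := by
      show ((x i + x' i)).val ≡ _ [MOD 2]
      rw [ZMod.val_add]
      exact Nat.mod_modEq _ 2
    calc (y i).val * ((x + x') i).val
        ≡ (y i).val * ((x i).val + (x' i).val) [MOD 2] := Nat.ModEq.mul_left _ hxi
      _ = (y i).val * (x i).val + (y i).val * (x' i).val := by ring
  exact (sum_modEq univ _ _ 2 (fun i _ => hterm i)).symm

lemma eps_comm (y x : Fin n → ZMod 2) : eps y x = eps x y := by
  unfold eps
  congr 1
  exact Finset.sum_congr rfl fun i _ => Nat.mul_comm _ _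

lemma eps_zero (y : Fin n → ZMod 2) : eps y 0 = 1 := by
  unfold eps
  have : ∀ i : Fin n, (y i).val * ((0 : Fin n → ZMod 2) i).val = 0 := by
    intro i
    show (y i).val * (0 : ZMod 2).val = 0
    rw [ZMod.val_zero, Nat.mul_zero]
  rw [Finset.sum_congr rfl (fun i _ => this i), Finset.sum_const, smul_eq_mul,
    Nat.mul_zero, pow_zero]

lemma eps_orth (w : Fin n → ZMod 2) :
    ∑ y : Fin n → ZMod 2, eps y w = if w = 0 then ((2 : ℂ) ^ n) else 0 := by
  have hexp : ∀ y : Fin n → ZMod 2,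
      eps y w = ∏ i : Fin n, (-1 : ℂ) ^ ((y i).val * (w i).val) := by
    intro y
    unfold eps
    rw [← Finset.prod_pow_eq_pow_sum]
  rw [Finset.sum_congr rfl (fun y _ => hexp y)]
  have := Finset.prod_univ_sum (fun _ : Fin n => (univ : Finset (ZMod 2)))
    (fun i v => (-1 : ℂ) ^ (v.val * (w i).val))
  rw [Fintype.piFinset_univ] at this
  rw [← this]
  have hfac : ∀ i : Fin n, (∑ v : ZMod 2, (-1 : ℂ) ^ (v.val * (w i).val))
      = if w i = 0 then 2 else 0 := by
    intro i
    have huniv : (univ : Finset (ZMod 2)) = {0, 1} := by decide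
    rw [huniv, Finset.sum_insert (by decide), Finset.sum_singleton]
    have h0 : ((0 : ZMod 2)).val = 0 := rfl
    have h1 : ((1 : ZMod 2)).val = 1 := rfl
    rw [h0, h1, Nat.zero_mul, Nat.one_mul, pow_zero]
    by_cases hwi : w i = 0
    · rw [hwi, if_pos rfl]
      norm_num [ZMod.val_zero]
    · rw [if_neg hwi]
      have : (w i).val = 1 := by
        have : ∀ b : ZMod 2, b ≠ 0 → b.val = 1 := by decide
        exact this _ hwi
      rw [this]
      norm_num
  rw [Finset.prod_congr rfl (fun i _ => hfac i)]
  by_cases hw : w = 0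
  · subst hw
    rw [if_pos rfl]
    have : ∀ i : Fin n, (if (0 : Fin n → ZMod 2) i = 0 then (2 : ℂ) else 0) = 2 := by
      intro i; simp
    rw [Finset.prod_congr rfl (fun i _ => this i), Finset.prod_const, Finset.card_univ,
      Fintype.card_fin]
  · rw [if_neg hw]
    have : ∃ i, w i ≠ 0 := by
      by_contra hno
      push_neg at hno
      exact hw (funext hno)
    obtain ⟨i, hi⟩ := this
    exact Finset.prod_eq_zero (mem_univ i) (by rw [if_neg hi])

end Fourier
end GBFaux

open Finset Polynomial
namespace GBFaux

section Fourier2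

variable {n m : ℕ} [NeZero m] {ζ : ℂ}

noncomputable def Sy (ζ : ℂ) (f : (Fin n → ZMod 2) → ZMod m) (y : Fin n → ZMod 2) : ℂ :=
  ∑ x : Fin n → ZMod 2, ζ ^ (f x).val * eps y x

noncomputable def Aw (ζ : ℂ) (f : (Fin n → ZMod 2) → ZMod m) (w : Fin n → ZMod 2) : ℂ :=
  ∑ x : Fin n → ZMod 2, ζ ^ (f x - f (x + w)).val

lemma conj_pow_val (hζ : IsPrimitiveRoot ζ m) (a : ZMod m) :
    (starRingEnd ℂ) (ζ ^ a.val) = ζ ^ (-a : ZMod m).val := by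
  have h1 : (ζ ^ a.val) * (starRingEnd ℂ) (ζ ^ a.val) = 1 := abs_one_of_prim hζ a
  have h2 : (ζ ^ a.val) * ζ ^ (-a : ZMod m).val = 1 := by
    rw [← pow_val_add hζ, add_neg_cancel]
    exact pow_val_zero hζ
  exact mul_left_cancel₀ (pow_val_ne_zero hζ a) (h1.trans h2.symm)

lemma conj_eps (y x : Fin n → ZMod 2) : (starRingEnd ℂ) (eps y x) = eps y x := by
  unfold eps
  rw [map_pow]
  norm_num

lemma S_mul_conj (hζ : IsPrimitiveRoot ζ m) (f : (Fin n → ZMod 2) → ZMod m)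
    (y : Fin n → ZMod 2) :
    Sy ζ f y * (starRingEnd ℂ) (Sy ζ f y) = ∑ w : Fin n → ZMod 2, eps y w * Aw ζ f w := by
  unfold Sy Aw
  rw [map_sum, Finset.sum_mul_sum]
  have hterm : ∀ x x' : Fin n → ZMod 2,
      (ζ ^ (f x).val * eps y x) * (starRingEnd ℂ) (ζ ^ (f x').val * eps y x')
        = ζ ^ (f x - f x').val * eps y (x + x') := by
    intro x x'
    rw [map_mul, conj_eps, conj_pow_val hζ]
    have : ζ ^ (f x).val * eps y x * (ζ ^ (-(f x') : ZMod m).val * eps y x')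
        = (ζ ^ (f x).val * ζ ^ (-(f x') : ZMod m).val) * (eps y x * eps y x') := by ring
    rw [this, ← pow_val_add hζ, ← sub_eq_add_neg, eps_mul]
  rw [Finset.sum_congr rfl (fun x _ => Finset.sum_congr rfl (fun x' _ => hterm x x'))]
  have hre : ∀ x : Fin n → ZMod 2,
      (∑ x' : Fin n → ZMod 2, ζ ^ (f x - f x').val * eps y (x + x'))
        = ∑ w : Fin n → ZMod 2, ζ ^ (f x - f (x + w)).val * eps y w := by
    intro x
    rw [← Equiv.sum_comp (Equiv.addLeft x)
      (fun x' => ζ ^ (f x - f x').val * eps y (x + x'))]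
    refine Finset.sum_congr rfl fun w _ => ?_
    have he : (Equiv.addLeft x) w = x + w := rfl
    rw [he]
    congr 2
    rw [← add_assoc, G_add_self, zero_add]
  rw [Finset.sum_congr rfl (fun x _ => hre x), Finset.sum_comm]
  refine Finset.sum_congr rfl fun w _ => ?_
  rw [Finset.mul_sum]
  exact Finset.sum_congr rfl fun x _ => by ring

lemma abs_sq_iff_conj {N : ℕ} (S : ℂ) :
    (‖S‖ ^ 2 = (2 : ℝ) ^ N) ↔ S * (starRingEnd ℂ) S = (2 : ℂ) ^ N := by
  rw [Complex.mul_conj, ← Complex.sq_norm]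
  constructor
  · intro h
    rw [h]
    push_cast
    ring
  · intro h
    have : ((‖S‖ ^ 2 : ℝ) : ℂ) = (((2 : ℝ) ^ N : ℝ) : ℂ) := by
      rw [h]
      push_cast
      ring
    exact_mod_cast this

lemma gbf_to_auto (hζ : IsPrimitiveRoot ζ m) (f : (Fin n → ZMod 2) → ZMod m)
    (hS : ∀ y, Sy ζ f y * (starRingEnd ℂ) (Sy ζ f y) = (2 : ℂ) ^ n) :
    ∀ z : Fin n → ZMod 2, z ≠ 0 → Aw ζ f z = 0 := by
  intro z hz
  have h1 : ∑ y : Fin n → ZMod 2, eps y z * (Sy ζ f y * (starRingEnd ℂ) (Sy ζ f y)) = 0 := by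
    rw [Finset.sum_congr rfl (fun y _ => by rw [hS y])]
    rw [← Finset.sum_mul, eps_orth z, if_neg hz, zero_mul]
  have h2 : ∑ y : Fin n → ZMod 2, eps y z * (Sy ζ f y * (starRingEnd ℂ) (Sy ζ f y))
      = (2 : ℂ) ^ n * Aw ζ f z := by
    rw [Finset.sum_congr rfl (fun y _ => by rw [S_mul_conj hζ f y])]
    have hsw : ∀ y : Fin n → ZMod 2, eps y z * (∑ w : Fin n → ZMod 2, eps y w * Aw ζ f w)
        = ∑ w : Fin n → ZMod 2, eps y (z + w) * Aw ζ f w := by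
      intro y
      rw [Finset.mul_sum]
      refine Finset.sum_congr rfl fun w _ => ?_
      rw [← mul_assoc, eps_mul]
    rw [Finset.sum_congr rfl (fun y _ => hsw y), Finset.sum_comm]
    have hin : ∀ w : Fin n → ZMod 2,
        (∑ y : Fin n → ZMod 2, eps y (z + w) * Aw ζ f w)
          = (if z + w = 0 then (2 : ℂ) ^ n else 0) * Aw ζ f w := by
      intro w
      rw [← Finset.sum_mul, eps_orth (z + w)]
    rw [Finset.sum_congr rfl (fun w _ => hin w)]
    rw [Finset.sum_eq_single z]
    · rw [if_pos (G_add_self z)]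
    · intro w _ hwz
      rw [if_neg, zero_mul]
      intro hzw
      apply hwz
      have h2' : z + (z + w) = z + 0 := congrArg (fun v => z + v) hzw
      rw [← add_assoc, G_add_self, zero_add, add_zero] at h2'
      exact h2'
    · intro hmem
      exact absurd (mem_univ z) hmem
  rw [h2] at h1
  have h2n : ((2 : ℂ) ^ n) ≠ 0 := pow_ne_zero _ two_ne_zero
  exact (mul_eq_zero.mp h1).resolve_left h2n

lemma auto_to_gbf (hζ : IsPrimitiveRoot ζ m) (f : (Fin n → ZMod 2) → ZMod m)
    (hA : ∀ z : Fin n → ZMod 2, z ≠ 0 → Aw ζ f z = 0) :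
    ∀ y, Sy ζ f y * (starRingEnd ℂ) (Sy ζ f y) = (2 : ℂ) ^ n := by
  intro y
  rw [S_mul_conj hζ f y]
  rw [Finset.sum_eq_single 0]
  · rw [eps_zero, one_mul]
    unfold Aw
    have hone : ∀ x : Fin n → ZMod 2, ζ ^ (f x - f (x + 0)).val = 1 := by
      intro x
      rw [add_zero, sub_self]
      exact pow_val_zero hζ
    rw [Finset.sum_congr rfl (fun x _ => hone x), Finset.sum_const, Finset.card_univ,
      nsmul_eq_mul, mul_one]
    have hcard : Fintype.card (Fin n → ZMod 2) = 2 ^ n := by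
      rw [Fintype.card_pi]
      simp [ZMod.card]
    rw [hcard]
    push_cast
    ring
  · intro w _ hw
    rw [hA w hw, mul_zero]
  · intro hmem
    exact absurd (mem_univ 0) hmem

end Fourier2
end GBFaux

open Finset Polynomial
namespace GBFaux

theorem main (s n r : ℕ) (hs : 0 < s) (hn : 1 ≤ n) (hr1 : 1 ≤ r) (hrs : r ≤ s)
    (p α : Fin s → ℕ) (hp : ∀ i, (p i).Prime) (hodd : ∀ i, Odd (p i))
    (hmono : StrictMono p) (hα : ∀ i, 1 ≤ α i)
    (hbig : ∀ i : Fin s, r ≤ (i : ℕ) → 2 ^ n < p ⟨0, hs⟩ + p i)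
    (hno : ¬ ∃ f : (Fin n → ZMod 2) →
        ZMod (∏ i ∈ Finset.univ.filter (fun i : Fin s => (i : ℕ) < r), p i ^ α i),
      IsGBF (∏ i ∈ Finset.univ.filter (fun i : Fin s => (i : ℕ) < r), p i ^ α i) n f) :
    ¬ ∃ f : (Fin n → ZMod 2) → ZMod (∏ i, p i ^ α i),
      IsGBF (∏ i, p i ^ α i) n f := by
  rintro ⟨f, hf⟩
  set mprod : ℕ → ℕ :=
    fun t => ∏ i ∈ Finset.univ.filter (fun i : Fin s => (i : ℕ) < t), p i ^ α i with hmprod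
  -- basic facts
  have hmne : ∀ t, mprod t ≠ 0 := by
    intro t
    show (∏ i ∈ Finset.univ.filter (fun i : Fin s => (i : ℕ) < t), p i ^ α i) ≠ 0
    rw [Finset.prod_ne_zero_iff]
    intro i _
    exact pow_ne_zero _ (hp i).ne_zero
  have hmodd : ∀ t, Odd (mprod t) := by
    intro t
    rw [Nat.odd_iff]
    rcases Nat.even_or_odd (mprod t) with he | ho
    · exfalso
      have h2 : (2 : ℕ) ∣ mprod t := even_iff_two_dvd.mp he
      have h2' : (2 : ℕ) ∣ ∏ i ∈ Finset.univ.filter (fun i : Fin s => (i : ℕ) < t),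
          p i ^ α i := h2
      obtain ⟨i, _, hdvd⟩ := (Nat.prime_two.prime.dvd_finset_prod_iff _).mp h2'
      have h2p : (2 : ℕ) ∣ p i := Nat.Prime.dvd_of_dvd_pow Nat.prime_two hdvd
      have := hodd i
      rw [Nat.odd_iff] at this
      omega
    · rwa [Nat.odd_iff] at ho
  have hp0mem : ∀ t, 1 ≤ t → (⟨0, hs⟩ : Fin s) ∈
      Finset.univ.filter (fun i : Fin s => (i : ℕ) < t) := by
    intro t ht
    rw [mem_filter]
    refine ⟨mem_univ _, ?_⟩
    show (0 : ℕ) < t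
    omega
  have hp0dvd : ∀ t, 1 ≤ t → p ⟨0, hs⟩ ∣ mprod t := by
    intro t ht
    have h1 : p ⟨0, hs⟩ ∣ p ⟨0, hs⟩ ^ α ⟨0, hs⟩ :=
      dvd_pow_self (p ⟨0, hs⟩) (by have := hα ⟨0, hs⟩; omega)
    exact h1.trans (Finset.dvd_prod_of_mem _ (hp0mem t ht))
  have hm1lt : ∀ t, 1 ≤ t → 1 < mprod t := by
    intro t ht
    have h1 := hp0dvd t ht
    have h2 := (hp ⟨0, hs⟩).two_le
    have := Nat.le_of_dvd (Nat.pos_of_ne_zero (hmne t)) h1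
    omega
  have hminfac : ∀ t, 1 ≤ t → (mprod t).minFac = p ⟨0, hs⟩ := by
    intro t ht
    have hle : (mprod t).minFac ≤ p ⟨0, hs⟩ :=
      Nat.minFac_le_of_dvd (hp ⟨0, hs⟩).two_le (hp0dvd t ht)
    have hge : p ⟨0, hs⟩ ≤ (mprod t).minFac := by
      have hprime : ((mprod t).minFac).Prime := Nat.minFac_prime (by
        have := hm1lt t ht
        omega)
      have hdvd : (mprod t).minFac ∣ ∏ i ∈ Finset.univ.filter
          (fun i : Fin s => (i : ℕ) < t), p i ^ α i := Nat.minFac_dvd _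
      obtain ⟨i, _, hdvd2⟩ := (hprime.prime.dvd_finset_prod_iff _).mp hdvd
      have h3 : (mprod t).minFac ∣ p i := hprime.dvd_of_dvd_pow hdvd2
      have h4 : (mprod t).minFac = p i := (Nat.prime_dvd_prime_iff_eq hprime (hp i)).mp h3
      rw [h4]
      exact hmono.monotone (by simp [Fin.le_def])
    omega
  have hsplit : ∀ t (ht : t < s),
      mprod (t + 1) = mprod t * p ⟨t, ht⟩ ^ α ⟨t, ht⟩ := by
    intro t ht
    show (∏ i ∈ Finset.univ.filter (fun i : Fin s => (i : ℕ) < t + 1), p i ^ α i)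
      = (∏ i ∈ Finset.univ.filter (fun i : Fin s => (i : ℕ) < t), p i ^ α i)
        * p ⟨t, ht⟩ ^ α ⟨t, ht⟩
    have hins : Finset.univ.filter (fun i : Fin s => (i : ℕ) < t + 1)
        = insert (⟨t, ht⟩ : Fin s) (Finset.univ.filter (fun i : Fin s => (i : ℕ) < t)) := by
      ext i
      simp only [mem_filter, mem_univ, true_and, Finset.mem_insert]
      constructor
      · intro hi
        rcases Nat.lt_succ_iff_lt_or_eq.mp hi with h | h
        · exact Or.inr h
        · exact Or.inl (Fin.ext h)
      · rintro (rfl | hi)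
        · exact Nat.lt_succ_self t
        · exact Nat.lt_succ_of_lt hi
    rw [hins, Finset.prod_insert (by
      rw [mem_filter]
      push_neg
      intro _
      exact le_rfl)]
    ring
  have hcop : ∀ t (ht : t < s), (mprod t).Coprime (p ⟨t, ht⟩ ^ α ⟨t, ht⟩) := by
    intro t ht
    show (∏ i ∈ Finset.univ.filter (fun i : Fin s => (i : ℕ) < t),
      p i ^ α i).Coprime (p ⟨t, ht⟩ ^ α ⟨t, ht⟩)
    refine Nat.Coprime.prod_left ?_
    intro i hi
    rw [mem_filter] at hi
    refine Nat.Coprime.pow _ _ ?_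
    rw [Nat.coprime_primes (hp i) (hp ⟨t, ht⟩)]
    intro heq
    have h1 := hmono.injective heq
    have h2 : (i : ℕ) = t := by rw [h1]
    omega
  -- the descent predicate
  set P : ℕ → Prop := fun t => ∃ ζ : ℂ, IsPrimitiveRoot ζ (mprod t) ∧
    ∃ b : (Fin n → ZMod 2) → ZMod (mprod t),
      ∀ z : Fin n → ZMod 2, z ≠ 0 → Aw ζ b z = 0 with hP
  have hmeq : mprod s = ∏ i, p i ^ α i := by
    show (∏ i ∈ Finset.univ.filter (fun i : Fin s => (i : ℕ) < s), p i ^ α i) = _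
    congr 1
    rw [Finset.filter_true_of_mem]
    intro i _
    exact i.isLt
  haveI : NeZero (∏ i, p i ^ α i) := ⟨hmeq ▸ hmne s⟩
  have hbase : P s := by
    have hζm : IsPrimitiveRoot (zetaC (∏ i, p i ^ α i)) (∏ i, p i ^ α i) :=
      Complex.isPrimitiveRoot_exp _ (hmeq ▸ hmne s)
    have hS : ∀ y, Sy (zetaC (∏ i, p i ^ α i)) f y
        * (starRingEnd ℂ) (Sy (zetaC (∏ i, p i ^ α i)) f y) = (2 : ℂ) ^ n := by
      intro y
      exact (abs_sq_iff_conj _).mp (hf y)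
    have hA := gbf_to_auto hζm f hS
    show ∃ ζ : ℂ, IsPrimitiveRoot ζ (mprod s) ∧
      ∃ b : (Fin n → ZMod 2) → ZMod (mprod s),
        ∀ z : Fin n → ZMod 2, z ≠ 0 → Aw ζ b z = 0
    rw [hmeq]
    exact ⟨_, hζm, f, hA⟩
  -- descent step
  have hstep : ∀ t, r ≤ t → ∀ (hts : t < s), P (t + 1) → P t := by
    intro t htr hts hPt1
    obtain ⟨ζ, hζ, b, hA⟩ := hPt1
    have hq : (p ⟨t, hts⟩).Prime := hp _
    have hγ1 : 1 ≤ α ⟨t, hts⟩ := hα _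
    have hm' : mprod (t + 1) = mprod t * p ⟨t, hts⟩ ^ α ⟨t, hts⟩ := hsplit t hts
    have hcop' : (mprod t).Coprime (p ⟨t, hts⟩ ^ α ⟨t, hts⟩) := hcop t hts
    haveI : NeZero (mprod t) := ⟨hmne t⟩
    haveI : NeZero (mprod (t + 1)) := ⟨hmne (t + 1)⟩
    haveI : NeZero (p ⟨t, hts⟩ ^ α ⟨t, hts⟩) := ⟨pow_ne_zero _ hq.ne_zero⟩
    have hM1 : 1 < mprod t := hm1lt t (by omega)
    have hpq : (mprod t).minFac ≤ p ⟨t, hts⟩ := by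
      rw [hminfac t (by omega)]
      exact hmono.monotone (by simp [Fin.le_def])
    have hGcard : Fintype.card (Fin n → ZMod 2) < (mprod t).minFac + p ⟨t, hts⟩ := by
      have hcard : Fintype.card (Fin n → ZMod 2) = 2 ^ n := by
        rw [Fintype.card_pi]
        simp [ZMod.card]
      rw [hcard, hminfac t (by omega)]
      exact hbig ⟨t, hts⟩ htr
    refine ⟨ζ ^ (p ⟨t, hts⟩ ^ α ⟨t, hts⟩), hζ.pow (Nat.pos_of_ne_zero (hmne (t + 1)))
      (by rw [hm', Nat.mul_comm]),
      fun x => aComp (mprod t) (p ⟨t, hts⟩ ^ α ⟨t, hts⟩) (mprod (t + 1)) hm' hcop' (b x), ?_⟩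
    intro z hz
    have hgz : ∀ x : Fin n → ZMod 2, (fun x => b x - b (x + z)) (x + z)
        = - (fun x => b x - b (x + z)) x := by
      intro x
      simp only
      rw [add_assoc, G_add_self, add_zero]
      ring
    have hrelz : ∑ x : Fin n → ZMod 2, ζ ^ ((b x - b (x + z)).val) = 0 := hA z hz
    have hdes := descent_core hq hγ1 hm' hcop' (hmodd t) (hodd _) hM1 hpq hζ
      hGcard G_add_self z hz (fun x => b x - b (x + z)) hgz hrelz
    unfold Aw
    rw [← hdes]
    refine Finset.sum_congr rfl fun x _ => ?_
    congr 1
    show (aComp _ _ _ hm' hcop' (b x) - aComp _ _ _ hm' hcop' (b (x + z))).val = _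
    rw [sub_eq_add_neg, ← aComp_neg hm' hcop', ← aComp_add hm' hcop', ← sub_eq_add_neg]
  -- downward induction
  have hdown : ∀ j : ℕ, j ≤ s - r → P (s - j) := by
    intro j
    induction j with
    | zero =>
      intro _
      simpa using hbase
    | succ j ih =>
      intro hj
      have hPj := ih (by omega)
      have heq : s - j = (s - (j + 1)) + 1 := by omega
      rw [heq] at hPj
      exact hstep (s - (j + 1)) (by omega) (by omega) hPj
  have hPr : P r := by
    have := hdown (s - r) le_rfl
    rwa [show s - (s - r) = r by omega] at this
  obtain ⟨ζr, hζr, b, hA⟩ := hPr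
  haveI : NeZero (mprod r) := ⟨hmne r⟩
  have hζ0 : IsPrimitiveRoot (zetaC (mprod r)) (mprod r) :=
    Complex.isPrimitiveRoot_exp _ (hmne r)
  obtain ⟨u, _, hu⟩ := hζ0.eq_pow_of_pow_eq_one hζr.pow_eq_one
  have hucop : u.Coprime (mprod r) := by
    rw [← hζ0.pow_iff_coprime (Nat.pos_of_ne_zero (hmne r)) u, hu]
    exact hζr
  have hA' : ∀ z : Fin n → ZMod 2, z ≠ 0 →
      Aw (zetaC (mprod r)) (fun x => (u : ZMod (mprod r)) * b x) z = 0 := by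
    intro z hz
    have heqA : Aw (zetaC (mprod r)) (fun x => (u : ZMod (mprod r)) * b x) z
        = Aw ζr b z := by
      unfold Aw
      refine Finset.sum_congr rfl fun x _ => ?_
      have hsub : (u : ZMod (mprod r)) * b x - (u : ZMod (mprod r)) * b (x + z)
          = (u : ZMod (mprod r)) * (b x - b (x + z)) := by ring
      rw [hsub, pow_val_natmul hζ0 u (b x - b (x + z)), ← hu, ← pow_mul, ← pow_mul,
        Nat.mul_comm]
    rw [heqA]
    exact hA z hz
  apply hno
  refine ⟨fun x => (u : ZMod (mprod r)) * b x, ?_⟩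
  intro y
  rw [abs_sq_iff_conj]
  exact auto_to_gbf hζ0 (fun x => (u : ZMod (mprod r)) * b x) hA' y

end GBFaux

theorem stmt_11 (s n r : ℕ) (hs : 0 < s) (hn : 1 ≤ n) (hr1 : 1 ≤ r) (hrs : r ≤ s)
    (p α : Fin s → ℕ) (hp : ∀ i, (p i).Prime) (hodd : ∀ i, Odd (p i))
    (hmono : StrictMono p) (hα : ∀ i, 1 ≤ α i)
    (hbig : ∀ i : Fin s, r ≤ (i : ℕ) → 2 ^ n < p ⟨0, hs⟩ + p i)
    (hno : ¬ ∃ f : (Fin n → ZMod 2) →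
        ZMod (∏ i ∈ Finset.univ.filter (fun i : Fin s => (i : ℕ) < r), p i ^ α i),
      IsGBF (∏ i ∈ Finset.univ.filter (fun i : Fin s => (i : ℕ) < r), p i ^ α i) n f) :
    ¬ ∃ f : (Fin n → ZMod 2) → ZMod (∏ i, p i ^ α i),
      IsGBF (∏ i, p i ^ α i) n f := by
  exact GBFaux.main s n r hs hn hr1 hrs p α hp hodd hmono hα hbig hno
end

section
/- Let n be an odd positive integer, let p be an odd prime, let α ≥ 1, and let m = 2·p^α. If an (m,n)-generalized bent function exists, then either 8·p < 2^n (i.e., p < 2^{n−3}) or 4·(p+1) = 2^n (i.e., p = 2^{n−2} − 1 is a Mersenne prime). -/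
lemma zetaC_pow (q k : ℕ) : zetaC q ^ k = Complex.exp (2 * Real.pi * Complex.I * k / q) := by
  rw [zetaC, ← Complex.exp_nat_mul]
  ring_nf

lemma zeta_two_mul (q h' : ℕ) (hq0 : q ≠ 0) (hh : (q : ℕ) + 1 = 2 * h') :
    zetaC (2 * q) = -(zetaC q ^ h') := by
  have hqC : (q : ℂ) ≠ 0 := Nat.cast_ne_zero.mpr hq0
  have hcast : (q : ℂ) + 1 = 2 * h' := by exact_mod_cast hh
  rw [zetaC_pow, zetaC]
  rw [show -(Complex.exp (2 * Real.pi * Complex.I * h' / q)) =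
      Complex.exp (Real.pi * Complex.I) * Complex.exp (2 * Real.pi * Complex.I * h' / q) by
    rw [Complex.exp_pi_mul_I]; ring]
  rw [← Complex.exp_add]
  have harg : (2 * (Real.pi:ℂ) * Complex.I / ((2 * q : ℕ) : ℂ)) + 2 * Real.pi * Complex.I
      = Real.pi * Complex.I + 2 * Real.pi * Complex.I * h' / q := by
    push_cast
    rw [show (h':ℂ) = ((q:ℂ)+1)/2 by rw [hcast]; ring]
    field_simp
    ring
  calc Complex.exp (2 * Real.pi * Complex.I / ((2 * q : ℕ) : ℂ))
      = Complex.exp (2 * Real.pi * Complex.I / ((2 * q : ℕ) : ℂ) + 2 * Real.pi * Complex.I) := by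
        rw [Complex.exp_add, Complex.exp_two_pi_mul_I, mul_one]
    _ = _ := by rw [harg]

lemma key_dvd (p α : ℕ) (hp : p.Prime) (hα : 1 ≤ α) (D : Polynomial ℤ) (N : ℤ)
    (hD : Polynomial.aeval (zetaC (p ^ α)) D = (N : ℂ)) :
    (p : ℤ) ∣ D.eval 1 - N := by
  haveI : Fact p.Prime := ⟨hp⟩
  have hq : p ^ α ≠ 0 := pow_ne_zero _ hp.pos.ne'
  have hqpos : 0 < p ^ α := Nat.pos_of_ne_zero hq
  have hprim : IsPrimitiveRoot (zetaC (p ^ α)) (p ^ α) := by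
    have := Complex.isPrimitiveRoot_exp (p ^ α) hq
    simpa [zetaC] using this
  have hint : IsIntegral ℤ (zetaC (p ^ α)) := hprim.isIntegral hqpos
  have hdvd : minpoly ℤ (zetaC (p ^ α)) ∣ D - Polynomial.C N :=
    minpoly.isIntegrallyClosed_dvd hint (by simp [hD])
  rw [← Polynomial.cyclotomic_eq_minpoly hprim hqpos] at hdvd
  obtain ⟨g, hg⟩ := hdvd
  have heval := congrArg (Polynomial.eval 1) hg
  obtain ⟨β, rfl⟩ : ∃ β, α = β + 1 := ⟨α - 1, by omega⟩
  simp only [Polynomial.eval_sub, Polynomial.eval_C, Polynomial.eval_mul,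
    Polynomial.eval_one_cyclotomic_prime_pow] at heval
  exact ⟨g.eval 1, heval⟩

lemma sq_ne_two_pow (k : ℕ) (hk : Odd k) (b : ℤ) : b ^ 2 ≠ 2 ^ k := by
  intro h
  have hb : b.natAbs ^ 2 = 2 ^ k := by
    have := congrArg Int.natAbs h
    simpa [Int.natAbs_pow] using this
  have hb0 : b.natAbs ≠ 0 := by
    intro h0
    rw [h0] at hb
    simp at hb
    exact absurd hb.symm (pow_ne_zero k two_ne_zero)
  have hfac := congrArg (fun m => m.factorization 2) hb
  simp only [Nat.factorization_pow, Finsupp.smul_apply, Nat.Prime.factorization_self,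
    Nat.prime_two] at hfac
  obtain ⟨j, hj⟩ := hk
  simp [Nat.Prime.factorization_pow, Nat.prime_two] at hfac
  omega

lemma M_cong {G : Type*} [Fintype G] (p α n : ℕ) (hp : p.Prime) (hpodd : Odd p) (hα : 1 ≤ α)
    (v : G → ℕ) (E : G → ℕ)
    (h : ‖(∑ x : G, zetaC (2 * p ^ α) ^ (v x) * (-1 : ℂ) ^ (E x))‖ ^ 2 = (2 : ℝ) ^ n) :
    (p : ℤ) ∣ (∑ x : G, (-1 : ℤ) ^ (v x + E x)) ^ 2 - 2 ^ n := by
  classical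
  set q := p ^ α with hqdef
  have hq0 : q ≠ 0 := pow_ne_zero _ hp.pos.ne'
  have hq1 : 1 ≤ q := Nat.one_le_iff_ne_zero.mpr hq0
  have hqodd : Odd q := hpodd.pow
  obtain ⟨j, hj⟩ := hqodd
  have hh : q + 1 = 2 * (j + 1) := by omega
  set h' := j + 1 with hh'def
  set ζ := zetaC q with hζdef
  have hprim : IsPrimitiveRoot ζ q := by
    have := Complex.isPrimitiveRoot_exp q hq0
    simpa [hζdef, zetaC] using this
  have hζq : ζ ^ q = 1 := hprim.pow_eq_one
  have hζ0 : ζ ≠ 0 := by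
    rw [hζdef, zetaC]; exact Complex.exp_ne_zero _
  -- conj ζ = ζ ^ (q - 1)
  have hζnorm : ζ * (starRingEnd ℂ) ζ = 1 := by
    rw [Complex.mul_conj]
    have hn1 : ‖ζ‖ = 1 := hprim.norm'_eq_one hq0
    rw [Complex.normSq_eq_norm_sq, hn1]
    norm_num
  have hconjζ : (starRingEnd ℂ) ζ = ζ ^ (q - 1) := by
    have h1 : ζ ^ (q - 1) * ζ = 1 := by
      rw [← pow_succ, Nat.sub_add_cancel hq1, hζq]
    have h2 : (starRingEnd ℂ) ζ * ζ = 1 := by rw [mul_comm] at hζnorm ⊢; rw [mul_comm]; exact hζnorm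
    exact mul_right_cancel₀ hζ0 (h2.trans h1.symm)
  -- the signs
  set s : G → ℤ := fun x => (-1 : ℤ) ^ (v x + E x) with hsdef
  set w : G → ℕ := fun x => h' * v x with hwdef
  -- rewrite the sum
  set Sg : ℂ := ∑ x : G, zetaC (2 * q) ^ (v x) * (-1 : ℂ) ^ (E x) with hSgdef
  have hterm : ∀ x : G, zetaC (2 * q) ^ (v x) * (-1 : ℂ) ^ (E x)
      = (s x : ℂ) * ζ ^ (w x) := by
    intro x
    rw [zeta_two_mul q h' hq0 hh]
    rw [neg_pow, ← pow_mul]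
    push_cast [hsdef]
    rw [pow_add]
    ring
  have hSg : Sg = ∑ x : G, (s x : ℂ) * ζ ^ (w x) := by
    rw [hSgdef]; exact Finset.sum_congr rfl fun x _ => hterm x
  have hconjSg : (starRingEnd ℂ) Sg = ∑ x : G, (s x : ℂ) * ζ ^ ((q - 1) * w x) := by
    rw [hSg, map_sum]
    refine Finset.sum_congr rfl fun x _ => ?_
    rw [map_mul, map_pow, hconjζ, ← pow_mul]
    congr 1
    simp
  have habs : Sg * (starRingEnd ℂ) Sg = ((2 ^ n : ℤ) : ℂ) := by
    rw [Complex.mul_conj, Complex.normSq_eq_norm_sq, h]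
    push_cast
    norm_num
  -- polynomial
  set D : Polynomial ℤ := ∑ x : G, ∑ x' : G,
      Polynomial.C (s x * s x') * Polynomial.X ^ (w x + (q - 1) * w x') with hDdef
  have hDeval : Polynomial.aeval ζ D = ((2 ^ n : ℤ) : ℂ) := by
    rw [hDdef]
    rw [map_sum]
    have : ∀ x : G, Polynomial.aeval ζ (∑ x' : G,
        Polynomial.C (s x * s x') * Polynomial.X ^ (w x + (q - 1) * w x'))
        = ∑ x' : G, (s x : ℂ) * (s x' : ℂ) * ζ ^ (w x + (q - 1) * w x') := by
      intro x
      rw [map_sum]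
      refine Finset.sum_congr rfl fun x' _ => ?_
      simp [Polynomial.aeval_C, mul_comm]
    rw [Finset.sum_congr rfl fun x _ => this x]
    rw [← habs, hconjSg, hSg, Finset.sum_mul_sum]
    refine Finset.sum_congr rfl fun x _ => Finset.sum_congr rfl fun x' _ => ?_
    rw [pow_add]
    ring
  have hD1 : D.eval 1 = (∑ x : G, s x) ^ 2 := by
    rw [hDdef]
    simp only [Polynomial.eval_finset_sum, Polynomial.eval_mul, Polynomial.eval_C,
      Polynomial.eval_pow, Polynomial.eval_X, one_pow, mul_one]
    rw [sq, Finset.sum_mul_sum]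
  have := key_dvd p α hp hα D (2 ^ n) hDeval
  rwa [hD1] at this

lemma zmod2_sum (g : ZMod 2 → ℤ) : (∑ b : ZMod 2, g b) = g 0 + g 1 := by
  rw [show (Finset.univ : Finset (ZMod 2)) = {0, 1} by decide,
    Finset.sum_insert (by decide), Finset.sum_singleton]

lemma card_fun2 (n : ℕ) : Fintype.card (Fin n → ZMod 2) = 2 ^ n := by
  simp [Fintype.card_fun]

lemma sum_M_sq (n : ℕ) (v : (Fin n → ZMod 2) → ℕ) :
    ∑ y : Fin n → ZMod 2, (∑ x : Fin n → ZMod 2,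
      (-1 : ℤ) ^ (v x + ∑ i : Fin n, (y i).val * (x i).val)) ^ 2 = 2 ^ n * 2 ^ n := by
  classical
  set E : (Fin n → ZMod 2) → (Fin n → ZMod 2) → ℕ :=
    fun y x => ∑ i : Fin n, (y i).val * (x i).val with hE
  have hkey : ∀ x x' : Fin n → ZMod 2,
      (∑ y : Fin n → ZMod 2, (-1 : ℤ) ^ (E y x + E y x'))
        = if x = x' then 2 ^ n else 0 := by
    intro x x'
    have hexp : ∀ y, E y x + E y x' = ∑ i : Fin n, (y i).val * ((x i).val + (x' i).val) := by
      intro y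
      rw [hE]
      simp only [mul_add]
      rw [Finset.sum_add_distrib]
    have hprod : ∀ y, ((-1 : ℤ)) ^ (E y x + E y x')
        = ∏ i : Fin n, (-1 : ℤ) ^ ((y i).val * ((x i).val + (x' i).val)) := by
      intro y
      rw [hexp y, Finset.prod_pow_eq_pow_sum]
    rw [Finset.sum_congr rfl fun y _ => hprod y]
    rw [← Fintype.prod_sum (fun i (b : ZMod 2) => (-1 : ℤ) ^ (b.val * ((x i).val + (x' i).val)))]
    have hfac : ∀ i : Fin n, (∑ b : ZMod 2, (-1 : ℤ) ^ (b.val * ((x i).val + (x' i).val)))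
        = 1 + (-1 : ℤ) ^ ((x i).val + (x' i).val) := by
      intro i
      rw [zmod2_sum]
      norm_num [ZMod.val_zero, ZMod.val_one]
    rw [Finset.prod_congr rfl fun i _ => hfac i]
    by_cases hxx : x = x'
    · subst hxx
      rw [if_pos rfl]
      have h2 : ∀ i : Fin n, (1 + (-1 : ℤ) ^ ((x i).val + (x i).val)) = 2 := by
        intro i
        rw [← two_mul, pow_mul]
        norm_num
      rw [Finset.prod_congr rfl fun i _ => h2 i, Finset.prod_const]
      simp
    · rw [if_neg hxx]
      obtain ⟨i, hi⟩ : ∃ i, x i ≠ x' i := by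
        by_contra hcon
        push_neg at hcon
        exact hxx (funext hcon)
      refine Finset.prod_eq_zero (Finset.mem_univ i) ?_
      have h1 : (x i).val + (x' i).val = 1 :=
        (by decide : ∀ a b : ZMod 2, a ≠ b → a.val + b.val = 1) _ _ hi
      rw [h1]
      norm_num
  calc ∑ y : Fin n → ZMod 2, (∑ x : Fin n → ZMod 2, (-1 : ℤ) ^ (v x + E y x)) ^ 2
      = ∑ y : Fin n → ZMod 2, ∑ x : Fin n → ZMod 2, ∑ x' : Fin n → ZMod 2,
          (-1 : ℤ) ^ (v x + E y x) * (-1 : ℤ) ^ (v x' + E y x') := by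
        refine Finset.sum_congr rfl fun y _ => ?_
        rw [sq, Finset.sum_mul_sum]
    _ = ∑ x : Fin n → ZMod 2, ∑ x' : Fin n → ZMod 2,
          (-1 : ℤ) ^ (v x + v x') * ∑ y : Fin n → ZMod 2, (-1 : ℤ) ^ (E y x + E y x') := by
        rw [Finset.sum_comm]
        refine Finset.sum_congr rfl fun x _ => ?_
        rw [Finset.sum_comm]
        refine Finset.sum_congr rfl fun x' _ => ?_
        rw [Finset.mul_sum]
        refine Finset.sum_congr rfl fun y _ => ?_
        rw [← pow_add, ← pow_add,
          show (v x + E y x) + (v x' + E y x') = (v x + v x') + (E y x + E y x') by ring]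
    _ = ∑ x : Fin n → ZMod 2, ∑ x' : Fin n → ZMod 2,
          (if x = x' then ((-1 : ℤ) ^ (v x + v x') * 2 ^ n) else 0) := by
        refine Finset.sum_congr rfl fun x _ => Finset.sum_congr rfl fun x' _ => ?_
        rw [hkey x x', mul_ite, mul_zero]
    _ = ∑ x : Fin n → ZMod 2, (-1 : ℤ) ^ (v x + v x) * 2 ^ n := by
        refine Finset.sum_congr rfl fun x _ => ?_
        rw [Finset.sum_ite_eq]
        simp
    _ = 2 ^ n * 2 ^ n := by
        have h1 : ∀ x : Fin n → ZMod 2, (-1 : ℤ) ^ (v x + v x) * 2 ^ n = 2 ^ n := by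
          intro x
          rw [← two_mul, pow_mul]
          norm_num
        rw [Finset.sum_congr rfl fun x _ => h1 x, Finset.sum_const, Finset.card_univ, card_fun2]
        simp [nsmul_eq_mul]

set_option maxHeartbeats 1000000 in
lemma endgame {ι : Type*} [Fintype ι] (n p : ℕ) (hn : 0 < n) (hnodd : Odd n)
    (hp : p.Prime) (hpodd : Odd p) (hcard : Fintype.card ι = 2 ^ n)
    (M : ι → ℤ)
    (h2 : ∀ y, (2 : ℤ) ∣ M y)
    (hcong : ∀ y, (p : ℤ) ∣ (M y) ^ 2 - 2 ^ n)
    (hsum : ∑ y : ι, (M y) ^ 2 = 2 ^ n * 2 ^ n) :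
    8 * p < 2 ^ n ∨ 4 * (p + 1) = 2 ^ n := by
  classical
  by_cases h8 : 8 * p < 2 ^ n
  · exact Or.inl h8
  push_neg at h8
  right
  have hp3 : 3 ≤ p := by
    have h2le := hp.two_le
    have : p ≠ 2 := by rintro rfl; exact (by norm_num : ¬ Odd 2) hpodd
    omega
  have hP3 : (3 : ℤ) ≤ (p : ℤ) := by exact_mod_cast hp3
  have hP0 : (p : ℤ) ≠ 0 := by omega
  have hPprime : Prime (p : ℤ) := Nat.prime_iff_prime_int.mp hp
  have hPodd : Odd (p : ℤ) := by exact_mod_cast hpodd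
  have hpnd2 : ∀ m : ℕ, ¬ (p : ℤ) ∣ 2 ^ m := by
    intro m hd
    have h2d : (p : ℤ) ∣ 2 := hPprime.dvd_of_dvd_pow hd
    have := Int.le_of_dvd (by norm_num) h2d
    omega
  -- split n
  have hncase : n = 1 ∨ ∃ K, n = K + 2 ∧ Odd K := by
    obtain ⟨j, hj⟩ := hnodd
    rcases Nat.eq_zero_or_pos j with rfl | hjpos
    · left; omega
    · right; exact ⟨2 * (j - 1) + 1, by omega, ⟨j - 1, by omega⟩⟩
  rcases hncase with rfl | ⟨K, rfl, hKodd⟩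
  · -- n = 1 : contradiction
    exfalso
    have hM4 : ∀ y, (4 : ℤ) ≤ (M y) ^ 2 := by
      intro y
      have hM0 : M y ≠ 0 := by
        intro h0
        have := hcong y
        rw [h0] at this
        norm_num at this
        have := Int.le_of_dvd (by norm_num) this
        omega
      obtain ⟨c, hc⟩ := h2 y
      have hc0 : c ≠ 0 := by rintro rfl; simp at hc; exact hM0 hc
      have h1c : 1 ≤ |c| := Int.one_le_abs hc0
      have hcsq : 1 ≤ c ^ 2 := by nlinarith [sq_abs c, sq_nonneg (|c| - 1)]
      have hMc : (M y) ^ 2 = 4 * c ^ 2 := by rw [hc]; ring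
      linarith
    have hle : ∑ y : ι, (4 : ℤ) ≤ ∑ y : ι, (M y) ^ 2 :=
      Finset.sum_le_sum fun y _ => hM4 y
    rw [hsum, Finset.sum_const, Finset.card_univ, hcard] at hle
    norm_num at hle
  -- main case n = K + 2
  have hKpos : 1 ≤ K := hKodd.pos
  have h2n4 : (2 : ℤ) ^ (K + 2) = 4 * 2 ^ K := by ring
  choose b hb using h2
  have hcongb : ∀ y, (p : ℤ) ∣ (b y) ^ 2 - 2 ^ K := by
    intro y
    have h4 := hcong y
    rw [hb y] at h4
    rw [show (2 * b y) ^ 2 - 2 ^ (K + 2) = 4 * ((b y) ^ 2 - 2 ^ K) by ring] at h4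
    rcases hPprime.dvd_mul.mp h4 with h | h
    · exfalso
      have h4' : (p : ℤ) ∣ 2 ^ 2 := by norm_num at h ⊢; exact_mod_cast h
      exact hpnd2 2 h4'
    · exact h
  choose t ht using hcongb
  have hsumb : ∑ y : ι, (b y) ^ 2 = 2 ^ (K + 2) * 2 ^ K := by
    have h4 : (4 : ℤ) * (∑ y : ι, (b y) ^ 2) = 4 * (2 ^ (K + 2) * 2 ^ K) := by
      rw [Finset.mul_sum]
      calc ∑ y : ι, 4 * (b y) ^ 2 = ∑ y : ι, (M y) ^ 2 := by
            refine Finset.sum_congr rfl fun y _ => ?_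
            rw [hb y]; ring
        _ = 2 ^ (K + 2) * 2 ^ (K + 2) := hsum
        _ = 4 * (2 ^ (K + 2) * 2 ^ K) := by ring
    exact mul_left_cancel₀ (by norm_num) h4
  have hcardZ : ((Fintype.card ι : ℕ) : ℤ) = 2 ^ (K + 2) := by
    rw [hcard]; push_cast; ring
  have hsumt : ∑ y : ι, t y = 0 := by
    have hPt : (p : ℤ) * (∑ y : ι, t y) = 0 := by
      rw [Finset.mul_sum]
      calc ∑ y : ι, (p : ℤ) * t y = ∑ y : ι, ((b y) ^ 2 - 2 ^ K) :=
            Finset.sum_congr rfl fun y _ => (ht y).symm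
        _ = (∑ y : ι, (b y) ^ 2) - (Fintype.card ι : ℤ) * 2 ^ K := by
            rw [Finset.sum_sub_distrib, Finset.sum_const, Finset.card_univ, nsmul_eq_mul]
        _ = 0 := by rw [hsumb, hcardZ]; ring
    exact (mul_eq_zero.mp hPt).resolve_left hP0
  have htne : ∀ y, t y ≠ 0 := by
    intro y h0
    have := ht y
    rw [h0, mul_zero, sub_eq_zero] at this
    exact sq_ne_two_pow K hKodd (b y) this
  have h8' : (2 : ℤ) ^ (K + 2) ≤ 8 * (p : ℤ) := by exact_mod_cast h8
  have h2K2p : (2 : ℤ) ^ K ≤ 2 * (p : ℤ) := by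
    rw [h2n4] at h8'; linarith
  have htm1 : ∀ y, -1 ≤ t y := by
    intro y
    by_contra hlt
    push_neg at hlt
    have hty : t y ≤ -2 := by omega
    have hb2 : (b y) ^ 2 = 2 ^ K + (p : ℤ) * t y := by linarith [ht y]
    have hmul : (p : ℤ) * t y ≤ (p : ℤ) * (-2) :=
      mul_le_mul_of_nonneg_left hty (by linarith)
    have hble : (b y) ^ 2 ≤ 2 ^ K - 2 * (p : ℤ) := by linarith
    have hbsq0 : (b y) ^ 2 = 0 := le_antisymm (by linarith) (sq_nonneg _)
    have hb00 : b y = 0 := by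
      have := sq_eq_zero_iff.mp hbsq0
      exact this
    rw [hb00] at hb2
    exact hpnd2 K ⟨-t y, by linarith⟩
  set Pos : Finset ι := Finset.univ.filter (fun y => 1 ≤ t y) with hPosdef
  have hnotpos : ∀ y, ¬ (1 ≤ t y) → t y = -1 := by
    intro y hy
    have := htm1 y
    have := htne y
    omega
  have hpow0 : (0:ℤ) < 2 ^ (K + 2) := by positivity
  have hposne : Pos.Nonempty := by
    by_contra hcon
    rw [Finset.not_nonempty_iff_eq_empty] at hcon
    have hall : ∀ y : ι, t y = -1 := by
      intro y
      refine hnotpos y fun h => ?_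
      have hmem : y ∈ Pos := by
        rw [hPosdef]; exact Finset.mem_filter.mpr ⟨Finset.mem_univ y, h⟩
      rw [hcon] at hmem
      exact absurd hmem (Finset.notMem_empty y)
    have hneg : ∑ y : ι, t y = -(2 ^ (K + 2) : ℤ) := by
      rw [Finset.sum_congr rfl fun y _ => hall y, Finset.sum_const, nsmul_eq_mul,
        Finset.card_univ, hcard]
      push_cast; ring
    rw [hsumt] at hneg
    omega
  have hnegex : ∃ y0, t y0 = -1 := by
    by_contra hno
    push_neg at hno
    have hall : ∀ y : ι, 1 ≤ t y := by
      intro y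
      have := htm1 y
      have := htne y
      have := hno y
      omega
    have hge : ((Fintype.card ι : ℕ) : ℤ) ≤ ∑ y : ι, t y := by
      calc ((Fintype.card ι : ℕ) : ℤ) = ∑ y : ι, (1 : ℤ) := by
            rw [Finset.sum_const, Finset.card_univ, nsmul_eq_mul, mul_one]
        _ ≤ ∑ y : ι, t y := Finset.sum_le_sum fun y _ => hall y
    rw [hsumt, hcardZ] at hge
    omega
  obtain ⟨y0, hy0⟩ := hnegex
  set a : ℤ := |b y0| with hadef
  have ha0 : 0 ≤ a := abs_nonneg _
  have ha2 : a ^ 2 = 2 ^ K - (p : ℤ) := by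
    rw [hadef, sq_abs]
    have h0 := ht y0
    rw [hy0] at h0
    linarith
  have hevenK : Even ((2:ℤ) ^ K) := by
    obtain ⟨m, rfl⟩ : ∃ m, K = m + 1 := ⟨K - 1, by omega⟩
    exact ⟨2 ^ m, by rw [pow_succ]; ring⟩
  have haodd : Odd a := by
    have hsq : Odd (a ^ 2) := by
      rw [ha2]
      rcases hevenK with ⟨m, hm⟩
      rcases hPodd with ⟨w, hw⟩
      exact ⟨m - w - 1, by omega⟩
    rcases Int.even_or_odd a with he | ho
    · exfalso
      rcases he with ⟨m, hm⟩
      rcases hsq with ⟨w, hw⟩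
      rw [hm, show (m + m) ^ 2 = 2 * (2 * (m * m)) by ring] at hw
      omega
    · exact ho
  have ha1 : 1 ≤ a := by
    rcases haodd with ⟨w, hw⟩
    omega
  have haP : a ^ 2 < (p : ℤ) := by
    have hle : a ^ 2 ≤ (p : ℤ) := by linarith
    rcases lt_or_eq_of_le hle with h | h
    · exact h
    · exfalso
      have hdvd : (p : ℤ) ∣ a ^ 2 := by rw [h]
      have hda : (p : ℤ) ∣ a := hPprime.dvd_of_dvd_pow hdvd
      have hpa := Int.le_of_dvd (by omega) hda
      have h3a : 3 * a ≤ a * a := mul_le_mul_of_nonneg_right (by linarith) (by linarith)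
      have haa : a ^ 2 = a * a := pow_two a
      linarith
  have h2aP : 2 * a < (p : ℤ) := by
    have h2a : 2 * a ≤ (p : ℤ) := by
      have hsq1 : 0 ≤ (a - 1) ^ 2 := sq_nonneg _
      have hexp : (a - 1) ^ 2 = a ^ 2 - 2 * a + 1 := by ring
      linarith
    have hne : (p : ℤ) ≠ 2 * a := by
      rcases hPodd with ⟨w, hw⟩
      omega
    omega
  -- sum over Pos
  have hsplitsum := Finset.sum_filter_add_sum_filter_not Finset.univ (fun y => 1 ≤ t y) t
  have hsplitone := Finset.sum_filter_add_sum_filter_not Finset.univ (fun y => 1 ≤ t y)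
    (fun _ => (1:ℤ))
  have hnegsum : ∑ y ∈ Finset.univ.filter (fun y => ¬ 1 ≤ t y), t y
      = ∑ y ∈ Finset.univ.filter (fun y => ¬ 1 ≤ t y), (-1 : ℤ) :=
    Finset.sum_congr rfl (fun y hy => hnotpos y (Finset.mem_filter.mp hy).2)
  have huniv1 : ∑ y : ι, (1:ℤ) = 2 ^ (K + 2) := by
    rw [Finset.sum_const, Finset.card_univ, nsmul_eq_mul, mul_one, hcardZ]
  have hPsum : ∑ y ∈ Pos, (t y + 1) = 2 ^ (K + 2) := by
    rw [Finset.sum_add_distrib]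
    have hnn : ∑ y ∈ Finset.univ.filter (fun y => ¬ 1 ≤ t y), (-1 : ℤ)
        = - ∑ y ∈ Finset.univ.filter (fun y => ¬ 1 ≤ t y), (1 : ℤ) := by
      rw [← Finset.sum_neg_distrib]
    rw [hnegsum, hnn] at hsplitsum
    rw [hsumt] at hsplitsum
    rw [huniv1] at hsplitone
    rw [hPosdef]
    linarith
  -- structure of positive t's
  have hstruct : ∀ y ∈ Pos, ∃ c e : ℤ, 1 ≤ c ∧ (e = c ∨ e = -c) ∧
      t y + 1 = c ^ 2 * (p : ℤ) + 2 * a * e := by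
    intro y hy
    have hty : 1 ≤ t y := (Finset.mem_filter.mp hy).2
    have hβ2 : |b y| ^ 2 = a ^ 2 + (p : ℤ) * (t y + 1) := by
      rw [sq_abs]
      have h0 := ht y
      linarith [ha2]
    have hma : (0:ℤ) < (p : ℤ) * (t y + 1) := mul_pos (by omega) (by linarith)
    have hβa : a < |b y| := by
      by_contra hno
      push_neg at hno
      have := pow_le_pow_left₀ (abs_nonneg (b y)) hno 2
      linarith
    have hdv : (p : ℤ) ∣ (|b y| - a) * (|b y| + a) := ⟨t y + 1, by linear_combination hβ2⟩
    rcases hPprime.dvd_mul.mp hdv with hca | hca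
    · obtain ⟨c, hc⟩ := hca
      have hpc : (0:ℤ) < (p : ℤ) * c := by rw [← hc]; linarith
      have hc1 : 1 ≤ c := by
        rcases mul_pos_iff.mp hpc with ⟨_, h⟩ | ⟨h1, _⟩
        · linarith
        · linarith
      refine ⟨c, c, hc1, Or.inl rfl, ?_⟩
      have key : (p : ℤ) * (t y + 1) = (p : ℤ) * (c ^ 2 * (p : ℤ) + 2 * a * c) := by
        linear_combination (|b y| + a + (p:ℤ) * c) * hc - hβ2
      exact mul_left_cancel₀ hP0 key
    · obtain ⟨c, hc⟩ := hca
      have hpc : (0:ℤ) < (p : ℤ) * c := by rw [← hc]; linarith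
      have hc1 : 1 ≤ c := by
        rcases mul_pos_iff.mp hpc with ⟨_, h⟩ | ⟨h1, _⟩
        · linarith
        · linarith
      refine ⟨c, -c, hc1, Or.inr rfl, ?_⟩
      have key : (p : ℤ) * (t y + 1) = (p : ℤ) * (c ^ 2 * (p : ℤ) + 2 * a * (-c)) := by
        linear_combination (|b y| + (p:ℤ) * c - a) * hc - hβ2
      exact mul_left_cancel₀ hP0 key
  choose! c e hc1 hce hte using hstruct
  set Q : ℤ := ∑ y ∈ Pos, (c y) ^ 2 with hQdef
  set R : ℤ := ∑ y ∈ Pos, e y with hRdef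
  set L : ℤ := ∑ y ∈ Pos, c y with hLdef
  have hmain : (p : ℤ) * Q + 2 * a * R = 4 * a ^ 2 + 4 * (p : ℤ) := by
    have h1 : ∑ y ∈ Pos, (t y + 1) = (p : ℤ) * Q + 2 * a * R := by
      rw [hQdef, hRdef, Finset.mul_sum, Finset.mul_sum, ← Finset.sum_add_distrib]
      refine Finset.sum_congr rfl fun y hy => ?_
      rw [hte y hy]
      ring
    rw [h1] at hPsum
    rw [hPsum]
    rw [h2n4, ha2]
    ring
  have hLQ : L ≤ Q := by
    rw [hLdef, hQdef]
    refine Finset.sum_le_sum fun y hy => ?_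
    exact le_self_pow₀ (hc1 y hy) (by norm_num)
  have hRL : |R| ≤ L := by
    rw [hRdef, hLdef]
    refine le_trans (Finset.abs_sum_le_sum_abs _ _) (Finset.sum_le_sum fun y hy => ?_)
    rcases hce y hy with h | h
    · rw [h, abs_of_nonneg (by linarith [hc1 y hy])]
    · rw [h, abs_neg, abs_of_nonneg (by linarith [hc1 y hy])]
  obtain ⟨hRQ1, hRQ2⟩ := abs_le.mp (hRL.trans hLQ)
  have hQ1 : 1 ≤ Q := by
    rw [hQdef]
    calc (1:ℤ) ≤ (Pos.card : ℤ) := by exact_mod_cast Finset.card_pos.mpr hposne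
      _ = ∑ y ∈ Pos, (1:ℤ) := by rw [Finset.sum_const, nsmul_eq_mul, mul_one]
      _ ≤ ∑ y ∈ Pos, (c y) ^ 2 := Finset.sum_le_sum fun y hy => by
            calc (1:ℤ) = 1 ^ 2 := by norm_num
              _ ≤ (c y) ^ 2 := pow_le_pow_left₀ (by norm_num) (hc1 y hy) 2
  have hmain2 : (p:ℤ) * (Q - 4) = 2 * a * (2 * a - R) := by linear_combination hmain
  have hQR2 : (2:ℤ) ∣ Q - R := by
    rw [hQdef, hRdef, ← Finset.sum_sub_distrib]
    refine Finset.dvd_sum fun y hy => ?_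
    rcases hce y hy with h | h
    · rw [h]
      obtain ⟨m, hm⟩ := Int.even_mul_succ_self (c y - 1)
      exact ⟨m, by linear_combination hm⟩
    · rw [h]
      obtain ⟨m, hm⟩ := Int.even_mul_succ_self (c y)
      exact ⟨m, by linear_combination hm⟩
  have hQeven : (2:ℤ) ∣ Q - 4 := by
    have h2d : (2:ℤ) ∣ (p:ℤ) * (Q - 4) := ⟨a * (2 * a - R), by linarith [hmain2]⟩
    rcases Int.prime_two.dvd_mul.mp h2d with h | h
    · exfalso; rcases hPodd with ⟨w, hw⟩; omega
    · exact h
  obtain ⟨r, hr⟩ := hQeven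
  have hrm1 : -1 ≤ r := by omega
  rcases eq_or_lt_of_le hrm1 with hre | hrgt
  · -- r = -1, Q = 2 : contradiction
    exfalso
    have hQ2 : Q = 2 := by omega
    have hpa : (p:ℤ) = a * (R - 2 * a) := by
      have h2p : 2 * ((p:ℤ)) = 2 * (a * (R - 2 * a)) := by
        rw [hQ2] at hmain2
        linear_combination -hmain2
      exact mul_left_cancel₀ two_ne_zero h2p
    have hdva : a ∣ (p:ℤ) := ⟨R - 2 * a, hpa⟩
    have hna : a.natAbs ∣ p := by
      have := Int.natAbs_dvd_natAbs.mpr hdva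
      simpa using this
    rcases Nat.Prime.eq_one_or_self_of_dvd hp _ hna with h1 | h1
    · have ha1' : a = 1 := by omega
      rw [ha1'] at hpa
      have hRp : R = (p:ℤ) + 2 := by linarith
      linarith
    · have hap : a = (p:ℤ) := by omega
      have h1a : 1 * a ≤ a * a := mul_le_mul_of_nonneg_right ha1 (by linarith)
      have haa : a ^ 2 = a * a := pow_two a
      linarith
  have hr0 : 0 ≤ r := by omega
  rcases eq_or_lt_of_le hr0 with hre0 | hrpos
  · -- r = 0, Q = 4 : the Mersenne case
    have hQ4 : Q = 4 := by omega
    have hza : 2 * a * (2 * a - R) = 0 := by rw [← hmain2, hQ4]; ring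
    have h2aR : 2 * a - R = 0 := by
      rcases mul_eq_zero.mp hza with h | h
      · exfalso; linarith
      · exact h
    have ha12 : a = 1 := by
      rcases haodd with ⟨w, hw⟩
      omega
    have h2K : (2:ℤ) ^ K = (p:ℤ) + 1 := by rw [ha12] at ha2; norm_num at ha2; linarith
    have hZ : ((4 * (p + 1) : ℕ) : ℤ) = ((2 ^ (K + 2) : ℕ) : ℤ) := by
      push_cast
      rw [show ((2:ℤ)) ^ (K + 2) = 4 * 2 ^ K by ring, h2K]
    exact_mod_cast hZ
  · -- r ≥ 1 : contradiction
    exfalso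
    have hr1 : 1 ≤ r := hrpos
    have hane : a ≠ 0 := by linarith
    have hmain3 : (p:ℤ) * r = a * (2 * a - R) := by
      have h2' : 2 * ((p:ℤ) * r) = 2 * (a * (2 * a - R)) := by
        linear_combination hmain2 - (p:ℤ) * hr
      exact mul_left_cancel₀ two_ne_zero h2'
    have hdvar : a ∣ r := by
      have hd1 : a ∣ (p:ℤ) * r := ⟨2 * a - R, hmain3⟩
      have hnd : ¬ p ∣ a.natAbs := by
        intro hdd
        have hanat : 1 ≤ a.natAbs := by omega
        have hle : p ≤ a.natAbs := Nat.le_of_dvd (by omega) hdd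
        have hle2 : (p:ℤ) ≤ a := by omega
        have h1a : 1 * a ≤ a * a := mul_le_mul_of_nonneg_right ha1 (by linarith)
        have haa : a ^ 2 = a * a := pow_two a
        linarith
      have hcop : Nat.Coprime a.natAbs p :=
        Nat.coprime_comm.mp ((Nat.Prime.coprime_iff_not_dvd hp).mpr hnd)
      have hd2 : a.natAbs ∣ p * r.natAbs := by
        have hx := Int.natAbs_dvd_natAbs.mpr hd1
        rw [Int.natAbs_mul] at hx
        simpa using hx
      exact Int.natAbs_dvd_natAbs.mp (Nat.Coprime.dvd_of_dvd_mul_left hcop hd2)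
    obtain ⟨s, hs⟩ := hdvar
    have hs1 : 1 ≤ s := by
      by_contra hns
      push_neg at hns
      have hs0 : s ≤ 0 := by omega
      have : a * s ≤ 0 := mul_nonpos_of_nonneg_of_nonpos (by linarith) hs0
      linarith [hs]
    have hps : (p:ℤ) * s = 2 * a - R := by
      have haa : a * ((p:ℤ) * s) = a * (2 * a - R) := by
        linear_combination hmain3 - (p:ℤ) * hs
      exact mul_left_cancel₀ hane haa
    have hReven : (2:ℤ) ∣ R := by omega
    have hseven : (2:ℤ) ∣ s := by
      have h2aRd : (2:ℤ) ∣ 2 * a - R := by omega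
      rw [← hps] at h2aRd
      rcases Int.prime_two.dvd_mul.mp h2aRd with h | h
      · exfalso; rcases hPodd with ⟨w, hw⟩; omega
      · exact h
    have hs2 : 2 ≤ s := by omega
    have hQval : Q = 4 + 2 * (a * s) := by linarith [hr, hs]
    have hbound : (p:ℤ) * s ≤ 2 * a + 4 + 2 * (a * s) := by linarith [hps, hQval, hRQ1]
    have hp3a : (p:ℤ) ≤ 3 * a + 2 := by
      have hprod : 0 ≤ (s - 2) * ((p:ℤ) - 2 * a) :=
        mul_nonneg (by linarith) (by linarith)
      have hexp : (s - 2) * ((p:ℤ) - 2 * a) = (p:ℤ) * s - 2 * (a * s) - 2 * (p:ℤ) + 4 * a := by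
        ring
      rw [hexp] at hprod
      linarith
    have ha3 : a ≤ 3 := by
      by_contra hcon4
      push_neg at hcon4
      have h4a : 4 * a ≤ a * a := mul_le_mul_of_nonneg_right (by linarith) (by linarith)
      have haa : a ^ 2 = a * a := pow_two a
      linarith
    have hacase : a = 1 ∨ a = 3 := by rcases haodd with ⟨w, hw⟩; omega
    rcases hacase with h1 | h3
    · have h2K : (2:ℤ) ^ K = (p:ℤ) + 1 := by rw [h1] at ha2; norm_num at ha2; linarith
      have hKle : (2:ℤ) ^ K ≤ 6 := by rw [h2K]; linarith
      rcases (by rcases hKodd with ⟨w, hw⟩; omega : K = 1 ∨ 3 ≤ K) with hK1 | hK3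
      · rw [hK1] at h2K; norm_num at h2K; linarith
      · have h8K : (2:ℤ) ^ 3 ≤ 2 ^ K := pow_le_pow_right₀ (by norm_num) hK3
        norm_num at h8K
        linarith
    · have h2K : (2:ℤ) ^ K = (p:ℤ) + 9 := by rw [h3] at ha2; norm_num at ha2; linarith
      have h9p : (9:ℤ) < (p:ℤ) := by rw [h3] at haP; norm_num at haP; linarith
      have hp11 : (p:ℤ) = 11 := by
        rcases hPodd with ⟨w, hw⟩
        rw [h3] at hp3a
        omega
      have h20 : (2:ℤ) ^ K = 20 := by rw [h2K, hp11]; norm_num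
      rcases le_or_gt K 4 with hK4 | hK5
      · have hx : (2:ℤ) ^ K ≤ 2 ^ 4 := pow_le_pow_right₀ (by norm_num) hK4
        norm_num at hx
        linarith
      · have hx : (2:ℤ) ^ 5 ≤ 2 ^ K := pow_le_pow_right₀ (by norm_num) (by omega)
        norm_num at hx
        linarith


set_option maxHeartbeats 1000000 in
theorem stmt_12 (n p α : ℕ) (hn : 0 < n) (hnodd : Odd n)
    (hp : p.Prime) (hpodd : Odd p) (hα : 1 ≤ α)
    (f : (Fin n → ZMod 2) → ZMod (2 * p ^ α)) (hf : IsGBF (2 * p ^ α) n f) :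
    8 * p < 2 ^ n ∨ 4 * (p + 1) = 2 ^ n := by
  classical
  set v : (Fin n → ZMod 2) → ℕ := fun x => (f x).val with hv
  set M : (Fin n → ZMod 2) → ℤ :=
    fun y => ∑ x : Fin n → ZMod 2, (-1 : ℤ) ^ (v x + ∑ i : Fin n, (y i).val * (x i).val) with hM
  refine endgame n p hn hnodd hp hpodd (card_fun2 n) M ?_ ?_ ?_
  · -- evenness
    intro y
    have hodd1 : ∀ k : ℕ, (2 : ℤ) ∣ ((-1 : ℤ) ^ k - 1) := by
      intro k
      rcases Nat.even_or_odd k with h | h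
      · rw [h.neg_one_pow]; norm_num
      · rw [h.neg_one_pow]; exact ⟨-1, by norm_num⟩
    have h1 : M y - (2 : ℤ) ^ n = ∑ x : Fin n → ZMod 2,
        ((-1 : ℤ) ^ (v x + ∑ i : Fin n, (y i).val * (x i).val) - 1) := by
      rw [Finset.sum_sub_distrib, Finset.sum_const, Finset.card_univ, card_fun2,
        nsmul_eq_mul, mul_one, hM]
      push_cast
      ring
    have h2 : (2 : ℤ) ∣ M y - (2 : ℤ) ^ n := by
      rw [h1]
      exact Finset.dvd_sum fun x _ => hodd1 _
    have h3 : (2 : ℤ) ∣ (2 : ℤ) ^ n := dvd_pow_self 2 hn.ne'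
    have := dvd_add h2 h3
    simpa using this
  · -- congruence
    intro y
    exact M_cong p α n hp hpodd hα v (fun x => ∑ i : Fin n, (y i).val * (x i).val) (hf y)
  · -- sum of squares
    exact sum_M_sq n v
end

section
/- Let n ∈ {1, 3}, let p be an odd prime, and let α ≥ 1. Then there is no (p^α, n)-generalized bent function and there is no (2·p^α, n)-generalized bent function. -/
open Finset Polynomial

/-- inner product exponent -/
def ip {n : ℕ} (y x : Fin n → ZMod 2) : ℕ := ∑ i, (y i).val * (x i).val

lemma neg_one_pow_par {R : Type*} [Monoid R] [HasDistribNeg R] {a b : ℕ}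
    (h : a % 2 = b % 2) : (-1 : R) ^ a = (-1 : R) ^ b := by
  rcases Nat.even_or_odd a with ha | ha
  · have hb : Even b := by rw [Nat.even_iff] at ha ⊢; omega
    rw [ha.neg_one_pow, hb.neg_one_pow]
  · have hb : Odd b := by rw [Nat.odd_iff] at ha ⊢; omega
    rw [ha.neg_one_pow, hb.neg_one_pow]

lemma sum_zmod2 {M : Type*} [AddCommMonoid M] (F : ZMod 2 → M) :
    ∑ b : ZMod 2, F b = F 0 + F 1 := by
  have : (univ : Finset (ZMod 2)) = {0, 1} := by decide
  rw [this, Finset.sum_insert (by decide), Finset.sum_singleton]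

lemma orth {n : ℕ} (c : Fin n → ZMod 2) :
    ∑ y : Fin n → ZMod 2, (-1 : ℂ) ^ ip y c = if c = 0 then (2 : ℂ) ^ n else 0 := by
  classical
  have h1 : ∀ y : Fin n → ZMod 2, (-1 : ℂ) ^ ip y c
      = ∏ i, (-1 : ℂ) ^ ((y i).val * (c i).val) := by
    intro y; rw [ip, Finset.prod_pow_eq_pow_sum]
  simp_rw [h1]
  have h2 : ∑ y : Fin n → ZMod 2, ∏ i, (-1 : ℂ) ^ ((y i).val * (c i).val)
      = ∏ i, ∑ b : ZMod 2, (-1 : ℂ) ^ (b.val * (c i).val) := by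
    rw [Finset.prod_univ_sum]
    rw [Fintype.piFinset_univ]
  rw [h2]
  by_cases hc : c = 0
  · subst hc
    simp only [Pi.zero_apply]
    norm_num
  · obtain ⟨i, hi⟩ := Function.ne_iff.mp hc
    have hci : c i = 1 := by
      have : ∀ v : ZMod 2, v ≠ 0 → v = 1 := by decide
      exact this _ hi
    rw [if_neg hc]
    apply Finset.prod_eq_zero (Finset.mem_univ i)
    rw [hci, sum_zmod2]
    have e1 : (1 : ZMod 2).val = 1 := rfl
    have e0 : (0 : ZMod 2).val = 0 := rfl
    rw [e1, e0]
    norm_num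

lemma ip_add {n : ℕ} (y a b : Fin n → ZMod 2) :
    (-1 : ℂ) ^ ip y a * (-1 : ℂ) ^ ip y b = (-1 : ℂ) ^ ip y (a + b) := by
  rw [← pow_add]
  apply neg_one_pow_par
  rw [ip, ip, ip, ← Finset.sum_add_distrib, Finset.sum_nat_mod,
    Finset.sum_nat_mod (f := fun i => (y i).val * ((a + b) i).val)]
  congr 1
  apply Finset.sum_congr rfl
  intro i _
  have hv : ((a + b) i).val = ((a i).val + (b i).val) % 2 := by
    rw [Pi.add_apply, ZMod.val_add]
  rw [hv]
  have hgen : ∀ u v w : ℕ, u < 2 → v < 2 → w < 2 →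
      (u * v + u * w) % 2 = u * ((v + w) % 2) % 2 := by
    intro u v w hu hv hw
    interval_cases u <;> interval_cases v <;> interval_cases w <;> rfl
  exact hgen _ _ _ (ZMod.val_lt _) (ZMod.val_lt _) (ZMod.val_lt _)

lemma key_rel {m n : ℕ} (hm : m ≠ 0) (f : (Fin n → ZMod 2) → ZMod m) (hf : IsGBF m n f)
    (d : Fin n → ZMod 2) (hd : d ≠ 0) :
    ∑ x : Fin n → ZMod 2, zetaC m ^ ((f x).val + (m - (f (x + d)).val)) = 0 := by
  classical
  haveI : NeZero m := ⟨hm⟩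
  set ζ : ℂ := zetaC m with hζdef
  have hprim : IsPrimitiveRoot ζ m := Complex.isPrimitiveRoot_exp m hm
  have hζm : ζ ^ m = 1 := hprim.pow_eq_one
  have hζabs : ‖ζ‖ = 1 := by
    rw [hζdef, zetaC, show 2 * (Real.pi : ℂ) * Complex.I / (m : ℂ)
        = ((2 * Real.pi / m : ℝ) : ℂ) * Complex.I by push_cast; ring]
    exact Complex.norm_exp_ofReal_mul_I _
  have hζ0 : ζ ≠ 0 := by
    intro h; rw [h] at hζabs; simp at hζabs
  have hconj : ∀ v : ℕ, v ≤ m → (starRingEnd ℂ) (ζ ^ v) = ζ ^ (m - v) := by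
    intro v hv
    have h1 : ζ ^ (m - v) * ζ ^ v = 1 := by
      rw [← pow_add, Nat.sub_add_cancel hv, hζm]
    have h2 : (starRingEnd ℂ) (ζ ^ v) * ζ ^ v = 1 := by
      rw [mul_comm, Complex.mul_conj, Complex.normSq_eq_norm_sq, norm_pow, hζabs]
      norm_num
    exact mul_right_cancel₀ (pow_ne_zero v hζ0) (h2.trans h1.symm)
  -- the transform values
  set S : (Fin n → ZMod 2) → ℂ :=
    fun y => ∑ x, ζ ^ (f x).val * (-1 : ℂ) ^ ip y x with hSdef
  have hS : ∀ y, S y * (starRingEnd ℂ) (S y) = (2 : ℂ) ^ n := by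
    intro y
    rw [Complex.mul_conj, Complex.normSq_eq_norm_sq]
    have h := hf y
    have he : ‖S y‖ ^ 2 = (2 : ℝ) ^ n := h
    rw [he]
    push_cast
    ring
  have hconjS : ∀ y, (starRingEnd ℂ) (S y)
      = ∑ x, (starRingEnd ℂ) (ζ ^ (f x).val) * (-1 : ℂ) ^ ip y x := by
    intro y
    rw [hSdef, map_sum]
    apply Finset.sum_congr rfl
    intro x _
    rw [map_mul]
    congr 1
    rw [map_pow, map_neg, map_one]
  -- expand S y * conj (S y)
  have hexpand : ∀ y, S y * (starRingEnd ℂ) (S y)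
      = ∑ x, ∑ x', (ζ ^ (f x).val * (starRingEnd ℂ) (ζ ^ (f x').val))
          * (-1 : ℂ) ^ ip y (x + x') := by
    intro y
    rw [hconjS y, hSdef, Finset.sum_mul_sum]
    apply Finset.sum_congr rfl; intro x _
    apply Finset.sum_congr rfl; intro x' _
    rw [← ip_add y x x']
    ring
  -- double counting
  have hT1 : ∑ y : Fin n → ZMod 2, (-1 : ℂ) ^ ip y d * (S y * (starRingEnd ℂ) (S y)) = 0 := by
    calc ∑ y : Fin n → ZMod 2, (-1 : ℂ) ^ ip y d * (S y * (starRingEnd ℂ) (S y))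
        = ∑ y : Fin n → ZMod 2, (-1 : ℂ) ^ ip y d * (2 : ℂ) ^ n := by
          apply Finset.sum_congr rfl; intro y _; rw [hS y]
      _ = (∑ y : Fin n → ZMod 2, (-1 : ℂ) ^ ip y d) * (2 : ℂ) ^ n := by
          rw [Finset.sum_mul]
      _ = 0 := by rw [orth d, if_neg hd, zero_mul]
  have hiff : ∀ x x' : Fin n → ZMod 2, x + x' + d = 0 ↔ x' = x + d := by
    intro x x'
    have hZ : ∀ a b c : ZMod 2, (a + b + c = 0 ↔ b = a + c) := by decide
    simp only [funext_iff, Pi.add_apply, Pi.zero_apply]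
    exact forall_congr' fun i => hZ (x i) (x' i) (d i)
  have hT2 : ∑ y : Fin n → ZMod 2, (-1 : ℂ) ^ ip y d * (S y * (starRingEnd ℂ) (S y))
      = (∑ x : Fin n → ZMod 2, ζ ^ (f x).val * (starRingEnd ℂ) (ζ ^ (f (x + d)).val))
        * (2 : ℂ) ^ n := by
    calc ∑ y : Fin n → ZMod 2, (-1 : ℂ) ^ ip y d * (S y * (starRingEnd ℂ) (S y))
        = ∑ y : Fin n → ZMod 2, ∑ x, ∑ x',
            (ζ ^ (f x).val * (starRingEnd ℂ) (ζ ^ (f x').val))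
              * (-1 : ℂ) ^ ip y (x + x' + d) := by
          apply Finset.sum_congr rfl; intro y _
          rw [hexpand y, Finset.mul_sum]
          apply Finset.sum_congr rfl; intro x _
          rw [Finset.mul_sum]
          apply Finset.sum_congr rfl; intro x' _
          rw [show x + x' + d = (x + x') + d by ring, ← ip_add y (x + x') d]
          ring
      _ = ∑ x, ∑ x', (ζ ^ (f x).val * (starRingEnd ℂ) (ζ ^ (f x').val))
            * ∑ y : Fin n → ZMod 2, (-1 : ℂ) ^ ip y (x + x' + d) := by
          rw [Finset.sum_comm]
          apply Finset.sum_congr rfl; intro x _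
          rw [Finset.sum_comm]
          apply Finset.sum_congr rfl; intro x' _
          rw [Finset.mul_sum]
      _ = ∑ x, ∑ x', (ζ ^ (f x).val * (starRingEnd ℂ) (ζ ^ (f x').val))
            * (if x' = x + d then (2:ℂ)^n else 0) := by
          apply Finset.sum_congr rfl; intro x _
          apply Finset.sum_congr rfl; intro x' _
          rw [orth (x + x' + d)]
          congr 1
          simp only [hiff x x']
      _ = ∑ x, ∑ x', (if x' = x + d then
            (ζ ^ (f x).val * (starRingEnd ℂ) (ζ ^ (f x').val)) * (2:ℂ)^n else 0) := by
          apply Finset.sum_congr rfl; intro x _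
          apply Finset.sum_congr rfl; intro x' _
          rw [mul_ite, mul_zero]
      _ = ∑ x, (ζ ^ (f x).val * (starRingEnd ℂ) (ζ ^ (f (x + d)).val)) * (2:ℂ)^n := by
          apply Finset.sum_congr rfl; intro x _
          rw [Finset.sum_ite_eq' univ (x + d)
            (fun x' => (ζ ^ (f x).val * (starRingEnd ℂ) (ζ ^ (f x').val)) * (2:ℂ)^n)]
          simp
      _ = (∑ x : Fin n → ZMod 2, ζ ^ (f x).val * (starRingEnd ℂ) (ζ ^ (f (x + d)).val))
            * (2 : ℂ) ^ n := by rw [Finset.sum_mul]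
  have h2n : ((2 : ℂ) ^ n) ≠ 0 := pow_ne_zero _ two_ne_zero
  have hz : (∑ x : Fin n → ZMod 2, ζ ^ (f x).val * (starRingEnd ℂ) (ζ ^ (f (x + d)).val)) = 0 := by
    have := hT2.symm.trans hT1
    exact (mul_eq_zero.mp this).resolve_right h2n
  rw [← hz]
  apply Finset.sum_congr rfl
  intro x _
  rw [pow_add, hconj _ (ZMod.val_lt _).le]

lemma lemA {p α : ℕ} (hp : p.Prime) (hα : 1 ≤ α) {z : ℂ} (hz : IsPrimitiveRoot z (p ^ α))
    {P : Polynomial ℤ} (hroot : Polynomial.aeval z P = 0) : (p : ℤ) ∣ P.eval 1 := by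
  haveI : Fact p.Prime := ⟨hp⟩
  have hpos : 0 < p ^ α := pow_pos hp.pos α
  have hint : IsIntegral ℤ z := hz.isIntegral hpos
  have hmin : cyclotomic (p ^ α) ℤ = minpoly ℤ z :=
    Polynomial.cyclotomic_eq_minpoly hz hpos
  obtain ⟨Q, hQ⟩ : minpoly ℤ z ∣ P := minpoly.isIntegrallyClosed_dvd hint hroot
  have hval : (cyclotomic (p ^ α) ℤ).eval 1 = p := by
    obtain ⟨β, rfl⟩ : ∃ β, α = β + 1 := ⟨α - 1, by omega⟩
    exact Polynomial.eval_one_cyclotomic_prime_pow β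
  have : P.eval 1 = (p : ℤ) * Q.eval 1 := by
    rw [hQ, eval_mul, ← hmin, hval]
  rw [this]
  exact Dvd.intro _ rfl

lemma case1 {p α n : ℕ} (hp : p.Prime) (hpodd : Odd p) (hα : 1 ≤ α) (hn : 0 < n) :
    ¬ ∃ f : (Fin n → ZMod 2) → ZMod (p ^ α), IsGBF (p ^ α) n f := by
  rintro ⟨f, hf⟩
  have hm0 : p ^ α ≠ 0 := (pow_pos hp.pos α).ne'
  set d : Fin n → ZMod 2 := fun _ => 1 with hd
  have hdne : d ≠ 0 := by
    intro h
    have := congrFun h ⟨0, hn⟩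
    simp [hd] at this
  have hrel := key_rel hm0 f hf d hdne
  set P : Polynomial ℤ := ∑ x : Fin n → ZMod 2,
    (X : Polynomial ℤ) ^ ((f x).val + (p ^ α - (f (x + d)).val)) with hP
  have haev : Polynomial.aeval (zetaC (p ^ α)) P = 0 := by
    rw [hP, map_sum]
    simpa [map_pow] using hrel
  have hdvd := lemA hp hα (Complex.isPrimitiveRoot_exp (p ^ α) hm0) haev
  have heval : P.eval 1 = (2 ^ n : ℕ) := by
    rw [hP]
    simp [Polynomial.eval_finset_sum, Finset.card_univ]
  rw [heval] at hdvd
  have hdev : p ∣ 2 ^ n := by exact_mod_cast hdvd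
  have hle : p ≤ 2 := Nat.le_of_dvd (by norm_num) (hp.dvd_of_dvd_pow hdev)
  have h2 := hp.two_le
  rw [Nat.odd_iff] at hpodd
  omega

lemma no_sq_small {G : ℤ} (h : G * G = 2 ∨ G * G = 8) : False := by
  have h8 : G * G ≤ 8 := by rcases h with h | h <;> omega
  have h1 : -3 ≤ G := by nlinarith [mul_self_nonneg (G + 3)]
  have h2 : G ≤ 3 := by nlinarith [mul_self_nonneg (G - 3)]
  interval_cases G <;> omega

lemma case2 {p α n : ℕ} (hp : p.Prime) (hpodd : Odd p) (hα : 1 ≤ α) (hn : n = 1 ∨ n = 3) :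
    ¬ ∃ f : (Fin n → ZMod 2) → ZMod (2 * p ^ α), IsGBF (2 * p ^ α) n f := by
  rintro ⟨f, hf⟩
  have hn0 : 0 < n := by rcases hn with h | h <;> omega
  have hq0 : p ^ α ≠ 0 := (pow_pos hp.pos α).ne'
  have hqpos : 0 < p ^ α := pow_pos hp.pos α
  have hm0 : 2 * p ^ α ≠ 0 := by positivity
  haveI : NeZero (2 * p ^ α) := ⟨hm0⟩
  have hqodd : Odd (p ^ α) := hpodd.pow
  obtain ⟨k, hk⟩ := hqodd
  -- s with 2 * s = p^α + 1
  set s : ℕ := k + 1 with hsdef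
  have hs : 2 * s = p ^ α + 1 := by omega
  have hcop : Nat.Coprime s (p ^ α) := by
    have h1 : Nat.gcd s (p ^ α) ∣ 2 * s := (Nat.gcd_dvd_left s (p ^ α)).mul_left 2
    have h2 : Nat.gcd s (p ^ α) ∣ p ^ α := Nat.gcd_dvd_right s (p ^ α)
    have h3 : Nat.gcd s (p ^ α) ∣ 1 := by
      have := Nat.dvd_sub h1 h2
      rwa [hs, Nat.add_sub_cancel_left] at this
    exact Nat.dvd_one.mp h3
  -- zetaC (p^α) ^ s = - zetaC (2 * p^α)
  have hmz : zetaC (p ^ α) ^ s = - zetaC (2 * p ^ α) := by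
    rw [zetaC, zetaC, ← Complex.exp_nat_mul]
    have hneg : (-1 : ℂ) = Complex.exp (Real.pi * Complex.I) := by
      rw [Complex.exp_pi_mul_I]
    rw [show - Complex.exp (2 * Real.pi * Complex.I / (2 * p ^ α : ℕ))
        = Complex.exp (Real.pi * Complex.I) *
          Complex.exp (2 * Real.pi * Complex.I / (2 * p ^ α : ℕ)) by
      rw [← hneg]; ring, ← Complex.exp_add]
    congr 1
    have hqC : ((p ^ α : ℕ) : ℂ) ≠ 0 := Nat.cast_ne_zero.mpr hq0
    have hsC : (2 : ℂ) * (s : ℕ) = ((p ^ α : ℕ) : ℂ) + 1 := by exact_mod_cast hs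
    push_cast
    push_cast at hsC
    have hpC : ((p : ℂ)) ^ α ≠ 0 := by exact_mod_cast hqC
    rw [show (s : ℂ) = ((p : ℂ) ^ α + 1) / 2 by rw [← hsC]; ring]
    field_simp
  have hzprim : IsPrimitiveRoot (zetaC (p ^ α) ^ s) (p ^ α) :=
    (Complex.isPrimitiveRoot_exp (p ^ α) hq0).pow_of_coprime s hcop
  -- the relation polynomials
  set g : (Fin n → ZMod 2) → ℤ := fun x => (-1 : ℤ) ^ ((f x).val) with hg
  set B : (Fin n → ZMod 2) → ℤ := fun d => ∑ x, g x * g (x + d) with hB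
  have hdvd : ∀ d : Fin n → ZMod 2, d ≠ 0 → (p : ℤ) ∣ B d := by
    intro d hd
    have hrel := key_rel hm0 f hf d hd
    set P : Polynomial ℤ := ∑ x : Fin n → ZMod 2,
      (X : Polynomial ℤ) ^ ((f x).val + (2 * p ^ α - (f (x + d)).val)) with hP
    have haev : Polynomial.aeval (zetaC (2 * p ^ α)) P = 0 := by
      rw [hP, map_sum]
      simpa [map_pow] using hrel
    set Q : Polynomial ℤ := P.comp (-X) with hQ
    have haevQ : Polynomial.aeval (zetaC (p ^ α) ^ s) Q = 0 := by
      rw [hQ, Polynomial.aeval_comp, map_neg, Polynomial.aeval_X, hmz, neg_neg]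
      exact haev
    have hdiv := lemA hp hα hzprim haevQ
    have hevalQ : Q.eval 1 = B d := by
      rw [hQ, Polynomial.eval_comp]
      simp only [Polynomial.eval_neg, Polynomial.eval_X]
      rw [hP, Polynomial.eval_finset_sum]
      rw [hB]
      apply Finset.sum_congr rfl
      intro x _
      simp only [Polynomial.eval_pow, Polynomial.eval_neg, Polynomial.eval_X]
      rw [pow_add, hg]
      congr 1
      apply neg_one_pow_par
      have hv : (f (x + d)).val < 2 * p ^ α := ZMod.val_lt _
      omega
    rwa [hevalQ] at hdiv
  have heven : ∀ d : Fin n → ZMod 2, (2 : ℤ) ∣ B d := by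
    intro d
    have : ((B d : ℤ) : ZMod 2) = 0 := by
      simp only [hB, hg]
      push_cast
      have hone : ∀ x : Fin n → ZMod 2,
          ((-1 : ZMod 2)) ^ ((f x).val) * ((-1 : ZMod 2)) ^ ((f (x + d)).val) = 1 := by
        intro x
        have : (-1 : ZMod 2) = 1 := by decide
        rw [this, one_pow, one_pow, one_mul]
      rw [Finset.sum_congr rfl (fun x _ => hone x)]
      rw [Finset.sum_const, Finset.card_univ]
      have hcard : Fintype.card (Fin n → ZMod 2) = 2 ^ n := by
        simp [Fintype.card_fun]
      rw [hcard]
      obtain ⟨j, rfl⟩ : ∃ j, n = j + 1 := ⟨n - 1, by omega⟩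
      have h2 : (2 : ZMod 2) = 0 := by decide
      simp [pow_succ, h2]
    exact (ZMod.intCast_zmod_eq_zero_iff_dvd _ 2).mp this
  set G : ℤ := ∑ x : Fin n → ZMod 2, g x with hG
  have hcard : Fintype.card (Fin n → ZMod 2) = 2 ^ n := by simp [Fintype.card_fun]
  have hB0 : B 0 = (2 ^ n : ℕ) := by
    rw [hB]
    simp only [add_zero]
    have hone : ∀ x : Fin n → ZMod 2, g x * g x = 1 := by
      intro x
      rw [hg, ← pow_add]
      exact Even.neg_one_pow ⟨(f x).val, rfl⟩
    rw [Finset.sum_congr rfl (fun x _ => hone x), Finset.sum_const, Finset.card_univ, hcard]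
    simp
  have hGG : G * G = B 0 + ∑ d ∈ Finset.univ.erase 0, B d := by
    have h1 : G * G = ∑ x : Fin n → ZMod 2, ∑ z : Fin n → ZMod 2, g x * g z := by
      rw [hG, Finset.sum_mul_sum]
    have h2 : ∑ d : Fin n → ZMod 2, B d
        = ∑ x : Fin n → ZMod 2, ∑ d : Fin n → ZMod 2, g x * g (x + d) := by
      rw [Finset.sum_comm]
    have h3 : ∀ x : Fin n → ZMod 2,
        ∑ d : Fin n → ZMod 2, g x * g (x + d) = ∑ z : Fin n → ZMod 2, g x * g z := by
      intro x
      exact Fintype.sum_equiv (Equiv.addLeft x) _ _ (fun d => rfl)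
    rw [h1, ← Finset.sum_congr rfl (fun x _ => h3 x), ← h2,
      ← Finset.add_sum_erase _ B (Finset.mem_univ 0)]
  rcases eq_or_ne p 3 with hp3 | hp3
  · -- p = 3 : mod 3 argument
    subst hp3
    have hcast := congrArg (fun t : ℤ => (t : ZMod 3)) hGG
    simp only [Int.cast_mul, Int.cast_add] at hcast
    have hzero : ((∑ d ∈ Finset.univ.erase 0, B d : ℤ) : ZMod 3) = 0 := by
      push_cast
      apply Finset.sum_eq_zero
      intro d hd
      have hd0 : d ≠ 0 := Finset.ne_of_mem_erase hd
      exact (ZMod.intCast_zmod_eq_zero_iff_dvd _ 3).mpr (by exact_mod_cast hdvd d hd0)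
    rw [hzero, add_zero] at hcast
    have h2n : ((B 0 : ℤ) : ZMod 3) = 2 := by
      rw [hB0]
      rcases hn with h | h <;> subst h <;> decide
    rw [h2n] at hcast
    have : ∀ u : ZMod 3, u * u ≠ 2 := by decide
    exact this _ hcast
  · -- p ≥ 5 : all B d = 0 for d ≠ 0
    have hp5 : 5 ≤ p := by
      have h2 := hp.two_le
      rw [Nat.odd_iff] at hpodd
      omega
    have hBzero : ∀ d ∈ Finset.univ.erase (0 : Fin n → ZMod 2), B d = 0 := by
      intro d hd
      have hd0 : d ≠ 0 := Finset.ne_of_mem_erase hd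
      by_contra hne
      have hcop2 : IsCoprime (2 : ℤ) (p : ℤ) := by
        rw [show (2 : ℤ) = ((2 : ℕ) : ℤ) by norm_num, Nat.isCoprime_iff_coprime]
        exact (Nat.coprime_primes Nat.prime_two hp).mpr (by omega)
      have hdvd2 : (2 * p : ℤ) ∣ B d := hcop2.mul_dvd (heven d) (hdvd d hd0)
      have hle : (2 * p : ℤ) ≤ |B d| :=
        Int.le_of_dvd (abs_pos.mpr hne) ((dvd_abs _ _).mpr hdvd2)
      have hbd : |B d| ≤ (2 ^ n : ℕ) := by
        rw [hB]
        calc |∑ x : Fin n → ZMod 2, g x * g (x + d)|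
            ≤ ∑ x : Fin n → ZMod 2, |g x * g (x + d)| := Finset.abs_sum_le_sum_abs _ _
          _ = ∑ x : Fin n → ZMod 2, 1 := by
              apply Finset.sum_congr rfl
              intro x _
              rw [abs_mul, hg, abs_pow, abs_pow, abs_neg, abs_one, one_pow, one_pow, one_mul]
          _ = (2 ^ n : ℕ) := by rw [Finset.sum_const, Finset.card_univ, hcard]; simp
      have h8 : ((2 ^ n : ℕ) : ℤ) ≤ 8 := by
        rcases hn with h | h <;> subst h <;> norm_num
      have hple : (10 : ℤ) ≤ 2 * p := by exact_mod_cast by omega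
      omega
    rw [Finset.sum_eq_zero hBzero, add_zero, hB0] at hGG
    apply no_sq_small (G := G)
    rcases hn with h | h <;> subst h <;> [left; right] <;> exact_mod_cast hGG

theorem stmt_13 (n p α : ℕ) (hn : n = 1 ∨ n = 3)
    (hp : p.Prime) (hpodd : Odd p) (hα : 1 ≤ α) :
    (¬ ∃ f : (Fin n → ZMod 2) → ZMod (p ^ α), IsGBF (p ^ α) n f) ∧
    (¬ ∃ f : (Fin n → ZMod 2) → ZMod (2 * p ^ α), IsGBF (2 * p ^ α) n f) := by
  have hn0 : 0 < n := by rcases hn with h | h <;> omega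
  exact ⟨case1 hp hpodd hα hn0, case2 hp hpodd hα hn⟩
end
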